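/- arXiv:1803.00170 — 3 statements merged into one kernel-verified Lean document; each statement's English description precedes it below -/
import Mathlib

section
/- Under the attacked stationary filter model, the second moment of the filter state satisfies E[x̂_k²] = K² σ_z² (1 + ρ𝒜) / ((1 − ρ𝒜)(1 − 𝒜²)) + B²(1 − C K)² σ_e² / (1 − 𝒜²). -/
open MeasureTheory ProbabilityTheory

open MeasureTheory ProbabilityTheory Real Filter Function
open scoped NNReal ENNReal

lemma aux_integrable_sq_exp {b : ℝ} (hb : 0 < b) :
    Integrable (fun x : ℝ => x ^ 2 * Real.exp (-b * x ^ 2)) := by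
  have h := integrable_rpow_mul_exp_neg_mul_sq hb (by norm_num : (-1:ℝ) < 2)
  rw [show ((2:ℝ)) = ((2:ℕ):ℝ) by norm_num] at h
  simpa [Real.rpow_natCast] using h

lemma aux_integral_sq_exp {b : ℝ} (hb : 0 < b) :
    ∫ x : ℝ, x ^ 2 * Real.exp (-b * x ^ 2) = (2*b)⁻¹ * Real.sqrt (π / b) := by
  have hu : ∀ x : ℝ, HasDerivAt (fun y : ℝ => y) 1 x := fun x => hasDerivAt_id x
  have hv : ∀ x : ℝ, HasDerivAt (fun y : ℝ => -(2*b)⁻¹ * Real.exp (-b * y^2))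
      (x * Real.exp (-b * x^2)) x := by
    intro x
    have h0 : HasDerivAt (fun y : ℝ => -b * y^2) (-b * (2*x^1)) x := by
      simpa using (hasDerivAt_pow 2 x).const_mul (-b)
    have h1 := (h0.exp).const_mul (-(2*b)⁻¹)
    refine h1.congr_deriv ?_
    have hinv : (2*b)⁻¹ * b = 1/2 := by
      rw [mul_inv_rev, mul_comm b⁻¹, mul_assoc, inv_mul_cancel₀ hb.ne', mul_one]; norm_num
    linear_combination (2 * x * Real.exp (-b * x^2)) * hinv
  have huv' : Integrable ((fun y : ℝ => y) * fun x => x * Real.exp (-b * x^2)) := by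
    have := aux_integrable_sq_exp hb
    apply this.congr
    · filter_upwards with x
      simp [Pi.mul_apply]; ring
  have hu'v : Integrable ((fun _ : ℝ => (1:ℝ)) * fun y : ℝ => -(2*b)⁻¹ * Real.exp (-b * y^2)) := by
    have := (integrable_exp_neg_mul_sq hb).const_mul (-(2*b)⁻¹)
    apply this.congr
    filter_upwards with x
    simp [Pi.mul_apply]
  have huv : Integrable ((fun y : ℝ => y) * fun y : ℝ => -(2*b)⁻¹ * Real.exp (-b * y^2)) := by
    have := (integrable_mul_exp_neg_mul_sq hb).const_mul (-(2*b)⁻¹)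
    apply this.congr
    filter_upwards with x
    simp [Pi.mul_apply]; ring
  have key := integral_mul_deriv_eq_deriv_mul_of_integrable (fun x _ => hu x) (fun x _ => hv x) huv' hu'v huv
  have e1 : ∫ x : ℝ, x ^ 2 * Real.exp (-b * x ^ 2)
      = ∫ x : ℝ, (fun y : ℝ => y) x * (x * Real.exp (-b * x^2)) := by
    congr 1; funext x; ring
  rw [e1, key]
  have : ∫ x : ℝ, (1:ℝ) * (-(2*b)⁻¹ * Real.exp (-b * x^2))
      = -(2*b)⁻¹ * ∫ x : ℝ, Real.exp (-b * x^2) := by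
    rw [← integral_const_mul]; congr 1; funext x; ring
  rw [this, integral_gaussian]
  ring

lemma aux_pdf_integral (v : ℝ≥0) (hv : v ≠ 0) (g : ℝ → ℝ) :
    ∫ x, g x ∂(gaussianReal 0 v) = ∫ x, gaussianPDFReal 0 v x * g x := by
  rw [gaussianReal_of_var_ne_zero 0 hv]
  have hpdf : gaussianPDF 0 v = fun x => ((gaussianPDFReal 0 v x).toNNReal : ℝ≥0∞) := by
    funext x; rfl
  rw [hpdf, integral_withDensity_eq_integral_smul
    ((measurable_gaussianPDFReal 0 v).real_toNNReal) g]
  congr 1; funext x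
  rw [NNReal.smul_def, Real.coe_toNNReal _ (gaussianPDFReal_nonneg 0 v x)]
  rfl

lemma aux_integral_comp_neg (f : ℝ → ℝ) : ∫ x : ℝ, f (-x) = ∫ x : ℝ, f x := by
  have A : MeasurableEmbedding fun x : ℝ => -x :=
    (Homeomorph.neg ℝ).isClosedEmbedding.measurableEmbedding
  conv_rhs => rw [← Measure.map_neg_eq_self (volume : Measure ℝ)]
  exact (A.integral_map f).symm

lemma aux_pdf_even (v : ℝ≥0) (x : ℝ) :
    gaussianPDFReal 0 v (-x) = gaussianPDFReal 0 v x := by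
  simp only [gaussianPDFReal]
  ring_nf

lemma aux_gauss_integral_id (v : ℝ≥0) : ∫ x, x ∂(gaussianReal 0 v) = 0 := by
  by_cases hv : v = 0
  · simp [hv, gaussianReal_zero_var]
  · rw [aux_pdf_integral v hv]
    have h := aux_integral_comp_neg (fun x => gaussianPDFReal 0 v x * x)
    simp only [aux_pdf_even] at h
    have h2 : ∫ x : ℝ, gaussianPDFReal 0 v x * -x = -∫ x : ℝ, gaussianPDFReal 0 v x * x := by
      rw [← integral_neg]; congr 1; funext x; ring
    rw [h2] at h
    linarith

lemma aux_pdf_sq_eq (v : ℝ≥0) (hv : v ≠ 0) (x : ℝ) :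
    gaussianPDFReal 0 v x * x ^ 2
      = (Real.sqrt (2 * π * v))⁻¹ * (x ^ 2 * Real.exp (-(2 * (v:ℝ))⁻¹ * x ^ 2)) := by
  have hvpos : (0:ℝ) < v := lt_of_le_of_ne v.coe_nonneg (by exact_mod_cast (Ne.symm hv))
  simp only [gaussianPDFReal, sub_zero]
  rw [show -x ^ 2 / (2 * (v:ℝ)) = -(2 * (v:ℝ))⁻¹ * x ^ 2 by field_simp]
  ring

lemma aux_gauss_integrable_sq (v : ℝ≥0) :
    Integrable (fun x : ℝ => x ^ 2) (gaussianReal 0 v) := by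
  by_cases hv : v = 0
  · rw [hv, gaussianReal_zero_var]
    refine ⟨(measurable_id.pow_const 2).aestronglyMeasurable, ?_⟩
    rw [HasFiniteIntegral, lintegral_dirac]
    exact ENNReal.coe_lt_top
  · have hvpos : (0:ℝ) < v := lt_of_le_of_ne v.coe_nonneg (by exact_mod_cast (Ne.symm hv))
    rw [gaussianReal_of_var_ne_zero 0 hv]
    have hpdf : gaussianPDF 0 v = fun x => ((gaussianPDFReal 0 v x).toNNReal : ℝ≥0∞) := by
      funext x; rfl
    rw [hpdf, integrable_withDensity_iff_integrable_smul
      ((measurable_gaussianPDFReal 0 v).real_toNNReal)]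
    have : Integrable (fun x : ℝ =>
        (Real.sqrt (2 * π * v))⁻¹ * (x ^ 2 * Real.exp (-(2 * (v:ℝ))⁻¹ * x ^ 2))) := by
      exact (aux_integrable_sq_exp (by positivity)).const_mul _
    apply this.congr
    filter_upwards with x
    rw [← aux_pdf_sq_eq v hv x, NNReal.smul_def,
      Real.coe_toNNReal _ (gaussianPDFReal_nonneg 0 v x)]
    rfl

lemma aux_gauss_integral_sq (v : ℝ≥0) : ∫ x, x ^ 2 ∂(gaussianReal 0 v) = v := by
  by_cases hv : v = 0
  · simp [hv, gaussianReal_zero_var]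
  · have hvpos : (0:ℝ) < v := lt_of_le_of_ne v.coe_nonneg (by exact_mod_cast (Ne.symm hv))
    rw [aux_pdf_integral v hv]
    calc ∫ x : ℝ, gaussianPDFReal 0 v x * x ^ 2
        = ∫ x : ℝ, (Real.sqrt (2 * π * v))⁻¹ * (x ^ 2 * Real.exp (-(2 * (v:ℝ))⁻¹ * x ^ 2)) := by
          congr 1; funext x; exact aux_pdf_sq_eq v hv x
      _ = (Real.sqrt (2 * π * v))⁻¹ * ((2 * (2 * (v:ℝ))⁻¹)⁻¹
            * Real.sqrt (π / (2 * (v:ℝ))⁻¹)) := by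
          rw [integral_const_mul, aux_integral_sq_exp (by positivity)]
      _ = v := by
          rw [show π / (2 * (v:ℝ))⁻¹ = 2 * π * v by field_simp]
          rw [show (2 * (2 * (v:ℝ))⁻¹)⁻¹ = v by field_simp]
          have hs : Real.sqrt (2 * π * (v:ℝ)) ≠ 0 := by positivity
          rw [mul_comm ((v:ℝ)), inv_mul_cancel_left₀ hs]

lemma aux_sum_norm_geom {r : ℝ} (hr : |r| < 1) : Summable (fun n : ℕ => ‖r ^ n‖) := by
  simpa [norm_pow, Real.norm_eq_abs] using summable_geometric_of_lt_one (abs_nonneg r) hr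

lemma aux_geom_prod_tsum {a b : ℝ} (ha : |a| < 1) (hb : |b| < 1) :
    ∑' p : ℕ × ℕ, a ^ p.1 * b ^ p.2 = (1 - a)⁻¹ * (1 - b)⁻¹ := by
  rw [← tsum_geometric_of_norm_lt_one (ξ := a) (by rwa [Real.norm_eq_abs]),
      ← tsum_geometric_of_norm_lt_one (ξ := b) (by rwa [Real.norm_eq_abs]),
      tsum_mul_tsum_of_summable_norm (aux_sum_norm_geom ha) (aux_sum_norm_geom hb)]

lemma aux_geom_prod_summable {a b : ℝ} (ha : |a| < 1) (hb : |b| < 1) :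
    Summable (fun p : ℕ × ℕ => a ^ p.1 * b ^ p.2) :=
  summable_mul_of_summable_norm (aux_sum_norm_geom ha) (aux_sum_norm_geom hb)

lemma aux_tsum {𝒜 ρ : ℝ} (h𝒜 : |𝒜| < 1) (hρ : |ρ| < 1) (P Q : ℝ) :
    ∑' p : ℕ × ℕ,
      𝒜 ^ (p.1 + p.2) * (P * ρ ^ (((p.1:ℤ) - (p.2:ℤ)).natAbs) + if p.1 = p.2 then Q else 0)
      = P * (1 + ρ * 𝒜) / ((1 - ρ * 𝒜) * (1 - 𝒜 ^ 2)) + Q / (1 - 𝒜 ^ 2) := by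
  have h𝒜2 : |𝒜 ^ 2| < 1 := by
    rw [abs_pow]; calc |𝒜| ^ 2 ≤ |𝒜| := pow_le_of_le_one (abs_nonneg _) h𝒜.le (by norm_num)
    _ < 1 := h𝒜
  have h𝒜ρ : |𝒜 * ρ| < 1 := by
    rw [abs_mul]
    calc |𝒜| * |ρ| ≤ |𝒜| * 1 := by
          exact mul_le_mul_of_nonneg_left hρ.le (abs_nonneg _)
    _ = |𝒜| := mul_one _
    _ < 1 := h𝒜
  set g : ℕ × ℕ → ℝ := fun p =>
    𝒜 ^ (p.1 + p.2) * (P * ρ ^ (((p.1:ℤ) - (p.2:ℤ)).natAbs) + if p.1 = p.2 then Q else 0)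
    with hg
  set gd : ℕ × ℕ → ℝ := fun p => if p.1 = p.2 then (𝒜 ^ 2) ^ p.1 * (P + Q) else 0 with hgd
  set gu : ℕ × ℕ → ℝ := fun p =>
    if p.1 < p.2 then 𝒜 ^ (p.1 + p.2) * P * ρ ^ (p.2 - p.1) else 0 with hgu
  set gl : ℕ × ℕ → ℝ := fun p =>
    if p.2 < p.1 then 𝒜 ^ (p.1 + p.2) * P * ρ ^ (p.1 - p.2) else 0 with hgl
  -- domination
  have hbound : ∀ (f : ℕ × ℕ → ℝ), (∀ p, |f p| ≤ |𝒜| ^ p.1 * ((|P| + |Q|) * |𝒜| ^ p.2)) →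
      Summable f := by
    intro f hf
    apply Summable.of_norm_bounded (g := fun p => |𝒜| ^ p.1 * ((|P| + |Q|) * |𝒜| ^ p.2)) ?_ (fun p => by simpa [Real.norm_eq_abs] using hf p)
    have := (aux_geom_prod_summable (a := |𝒜|) (b := |𝒜|) (by rwa [abs_abs]) (by rwa [abs_abs]))
    apply Summable.congr (this.mul_left (|P| + |Q|))
    intro p; ring
  have habs : ∀ (i j n : ℕ) (R : ℝ), |R| ≤ |P| + |Q| →
      |𝒜 ^ (i + j) * R * ρ ^ n| ≤ |𝒜| ^ i * ((|P| + |Q|) * |𝒜| ^ j) := by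
    intro i j n R hR
    have h1 : |ρ ^ n| ≤ 1 := by
      rw [abs_pow]; exact pow_le_one₀ (abs_nonneg _) hρ.le
    have h2 : (0:ℝ) ≤ |𝒜| ^ i * |𝒜| ^ j := by positivity
    calc |𝒜 ^ (i + j) * R * ρ ^ n| = (|𝒜| ^ i * |𝒜| ^ j) * (|R| * |ρ ^ n|) := by
          rw [abs_mul, abs_mul, abs_pow, pow_add]; ring
    _ ≤ (|𝒜| ^ i * |𝒜| ^ j) * ((|P| + |Q|) * 1) := by
          apply mul_le_mul_of_nonneg_left _ h2
          exact mul_le_mul hR h1 (abs_nonneg _) (by positivity)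
    _ = |𝒜| ^ i * ((|P| + |Q|) * |𝒜| ^ j) := by ring
  have hPle : |P| ≤ |P| + |Q| := le_add_of_nonneg_right (abs_nonneg _)
  have hgs : Summable g := by
    apply hbound; intro p
    rw [hg]; simp only
    calc |𝒜 ^ (p.1 + p.2) * (P * ρ ^ ((p.1:ℤ) - (p.2:ℤ)).natAbs + if p.1 = p.2 then Q else 0)|
        ≤ |𝒜 ^ (p.1 + p.2)| * (|P * ρ ^ ((p.1:ℤ) - (p.2:ℤ)).natAbs| + |if p.1 = p.2 then Q else 0|) := by
          rw [abs_mul]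
          exact mul_le_mul_of_nonneg_left (abs_add_le _ _) (abs_nonneg _)
    _ ≤ |𝒜| ^ p.1 * ((|P| + |Q|) * |𝒜| ^ p.2) := by
          have h1 : |P * ρ ^ ((p.1:ℤ) - (p.2:ℤ)).natAbs| ≤ |P| := by
            rw [abs_mul]
            calc |P| * |ρ ^ _| ≤ |P| * 1 := by
                  apply mul_le_mul_of_nonneg_left _ (abs_nonneg _)
                  rw [abs_pow]; exact pow_le_one₀ (abs_nonneg _) hρ.le
            _ = |P| := mul_one _
          have h2 : |if p.1 = p.2 then Q else 0| ≤ |Q| := by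
            split <;> simp [abs_nonneg]
          calc |𝒜 ^ (p.1 + p.2)| * (|P * ρ ^ ((p.1:ℤ) - (p.2:ℤ)).natAbs| + |if p.1 = p.2 then Q else 0|)
              ≤ |𝒜 ^ (p.1 + p.2)| * (|P| + |Q|) := by
                exact mul_le_mul_of_nonneg_left (add_le_add h1 h2) (abs_nonneg _)
          _ = |𝒜| ^ p.1 * ((|P| + |Q|) * |𝒜| ^ p.2) := by
                rw [abs_pow, pow_add]; ring
  have hgds : Summable gd := by
    apply hbound; intro p
    rw [hgd]; simp only
    split
    · rename_i h
      have : ((𝒜 ^ 2) ^ p.1 : ℝ) = 𝒜 ^ (p.1 + p.2) := by rw [← h, ← pow_mul]; ring_nf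
      rw [this]
      simpa using habs p.1 p.2 0 (P + Q) (abs_add_le _ _)
    · simp; positivity
  have hgus : Summable gu := by
    apply hbound; intro p
    rw [hgu]; simp only
    split
    · exact habs p.1 p.2 _ P hPle
    · simp; positivity
  have hgls : Summable gl := by
    apply hbound; intro p
    rw [hgl]; simp only
    split
    · exact habs p.1 p.2 _ P hPle
    · simp; positivity
  have hsplit : ∀ p, g p = gd p + (gu p + gl p) := by
    intro ⟨i, j⟩
    rw [hg, hgd, hgu, hgl]; simp only
    rcases lt_trichotomy i j with h | h | h
    · have h1 : ¬ i = j := Nat.ne_of_lt h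
      have h2 : ¬ j < i := Nat.lt_asymm h
      have h3 : ((i:ℤ) - (j:ℤ)).natAbs = j - i := by omega
      rw [if_neg h1, if_pos h, if_neg h2, if_neg h1, h3]
      ring
    · subst h
      have h1 : ¬ i < i := lt_irrefl i
      have h3 : ((i:ℤ) - (i:ℤ)).natAbs = 0 := by omega
      rw [if_pos rfl, if_neg h1, if_pos rfl, h3]
      ring
    · have h1 : ¬ i = j := (Nat.ne_of_lt h).symm
      have h2 : ¬ i < j := Nat.lt_asymm h
      have h3 : ((i:ℤ) - (j:ℤ)).natAbs = i - j := by omega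
      rw [if_neg h1, if_neg h2, if_pos h, if_neg h1, h3]
      ring
  -- values of the three sums
  have hd : ∑' p, gd p = (P + Q) * (1 - 𝒜 ^ 2)⁻¹ := by
    have hinj : Function.Injective (fun i : ℕ => ((i, i) : ℕ × ℕ)) := by
      intro a b h; simpa using h
    rw [← Function.Injective.tsum_eq hinj ?hsupp]
    · have : ∀ i : ℕ, gd (i, i) = (𝒜 ^ 2) ^ i * (P + Q) := by
        intro i; rw [hgd]; simp
      rw [tsum_congr this, tsum_mul_right,
        tsum_geometric_of_norm_lt_one (by rwa [Real.norm_eq_abs])]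
      ring
    case hsupp =>
      intro p hp
      rcases eq_or_ne p.1 p.2 with h | h
      · exact ⟨p.1, Prod.ext rfl h⟩
      · exfalso; apply hp; rw [hgd]; simp only; rw [if_neg h]
  have hoff : ∀ (f : ℕ × ℕ → ℝ) (u : ℕ × ℕ → ℕ × ℕ), Function.Injective u →
      (∀ p, p ∉ Set.range u → f p = 0) →
      (∀ q : ℕ × ℕ, f (u q) = ((𝒜 ^ 2) ^ q.1 * (𝒜 * ρ) ^ q.2) * (𝒜 * ρ * P)) →
      ∑' p, f p = (1 - 𝒜 ^ 2)⁻¹ * (1 - 𝒜 * ρ)⁻¹ * (𝒜 * ρ * P) := by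
    intro f u hinj hsupp hval
    rw [← Function.Injective.tsum_eq hinj (fun p hp => by
      by_contra hc; exact hp (hsupp p hc))]
    rw [tsum_congr hval, tsum_mul_right, aux_geom_prod_tsum h𝒜2 h𝒜ρ]
  have hu : ∑' p, gu p = (1 - 𝒜 ^ 2)⁻¹ * (1 - 𝒜 * ρ)⁻¹ * (𝒜 * ρ * P) := by
    apply hoff gu (fun q => (q.1, q.1 + q.2 + 1))
    · intro a b h
      rw [Prod.ext_iff] at h ⊢
      simp only at h ⊢
      omega
    · rintro ⟨i, j⟩ hp
      rw [hgu]; simp only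
      rw [if_neg]
      intro hij
      exact hp ⟨(i, j - i - 1), by rw [Prod.ext_iff]; simp; omega⟩
    · rintro ⟨i, m⟩
      rw [hgu]; simp only
      rw [if_pos (by omega)]
      have h4 : i + m + 1 - i = m + 1 := by omega
      rw [h4]
      ring
  have hl : ∑' p, gl p = (1 - 𝒜 ^ 2)⁻¹ * (1 - 𝒜 * ρ)⁻¹ * (𝒜 * ρ * P) := by
    apply hoff gl (fun q => (q.1 + q.2 + 1, q.1))
    · intro a b h
      rw [Prod.ext_iff] at h ⊢
      simp only at h ⊢
      omega
    · rintro ⟨i, j⟩ hp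
      rw [hgl]; simp only
      rw [if_neg]
      intro hij
      exact hp ⟨(j, i - j - 1), by rw [Prod.ext_iff]; simp; omega⟩
    · rintro ⟨i, m⟩
      rw [hgl]; simp only
      rw [if_pos (by omega)]
      have h4 : i + m + 1 - i = m + 1 := by omega
      rw [h4]
      ring
  have htotal : ∑' p, g p = (P + Q) * (1 - 𝒜 ^ 2)⁻¹
      + ((1 - 𝒜 ^ 2)⁻¹ * (1 - 𝒜 * ρ)⁻¹ * (𝒜 * ρ * P)
        + (1 - 𝒜 ^ 2)⁻¹ * (1 - 𝒜 * ρ)⁻¹ * (𝒜 * ρ * P)) := by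
    rw [tsum_congr hsplit, Summable.tsum_add hgds (hgus.add hgls), Summable.tsum_add hgus hgls, hd, hu, hl]
  rw [htotal]
  have hA2 : (1 : ℝ) - 𝒜 ^ 2 ≠ 0 := by
    have := (abs_lt.mp h𝒜2).2
    intro h; linarith
  have hAρ : (1 : ℝ) - 𝒜 * ρ ≠ 0 := by
    have := (abs_lt.mp h𝒜ρ).2
    intro h; linarith
  have hρ𝒜 : (1 : ℝ) - ρ * 𝒜 ≠ 0 := by rwa [mul_comm ρ 𝒜]
  field_simp
  ring

/-- Under the attacked stationary filter model, the second moment of the filter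
state satisfies
`E[x̂_k²] = K² σ_z² (1 + ρ𝒜) / ((1 − ρ𝒜)(1 − 𝒜²)) + B²(1 − C K)² σ_e² / (1 − 𝒜²)`. -/
theorem attacked_xhat_second_moment
    {Ω : Type*} [MeasurableSpace Ω] (μ : Measure Ω) [IsProbabilityMeasure μ]
    (z e : ℤ → Ω → ℝ) (A B C K L ρ σz σe : ℝ)
    (hρ : |ρ| < 1)
    (𝒜 : ℝ) (h𝒜def : 𝒜 = (1 - C * K) * (A + B * L)) (h𝒜 : |𝒜| < 1)
    -- `z` is a centered stationary Gaussian process with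
    -- `E[z_k z_{k−j}] = ρ^{|j|} σ_z²` for all `j ≥ 0`
    (hzgauss : ∀ (s : Finset ℤ) (c : ℤ → ℝ), ∃ v : NNReal,
      Measure.map (fun ω => ∑ i ∈ s, c i * z i ω) μ = gaussianReal 0 v)
    (hzL2 : ∀ k, MemLp (z k) 2 μ)
    (hzcov : ∀ (k : ℤ) (j : ℕ), ∫ ω, z k ω * z (k - (j : ℤ)) ω ∂μ = ρ ^ j * σz ^ 2)
    -- `e` is an i.i.d. `N(0, σ_e²)` sequence, independent of the process `z`
    (helaw : ∀ k, Measure.map (e k) μ = gaussianReal 0 (σe ^ 2).toNNReal)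
    (heindep : iIndepFun e μ)
    (hze : IndepFun (fun ω => fun i => z i ω) (fun ω => fun i => e i ω) μ)
    -- the stationary attacked filter state, defined by the L²-convergent series
    (xhat : ℤ → Ω → ℝ)
    (hxhat : ∀ (k : ℤ) (ω : Ω), xhat k ω =
      ∑' i : ℕ, 𝒜 ^ i * (K * z (k - (i : ℤ)) ω + B * (1 - C * K) * e (k - 1 - (i : ℤ)) ω)) :
    ∀ k : ℤ, ∫ ω, (xhat k ω) ^ 2 ∂μ =
      K ^ 2 * σz ^ 2 * (1 + ρ * 𝒜) / ((1 - ρ * 𝒜) * (1 - 𝒜 ^ 2)) +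
        B ^ 2 * (1 - C * K) ^ 2 * σe ^ 2 / (1 - 𝒜 ^ 2) := by
  intro k
  set c : ℝ := B * (1 - C * K) with hc
  set f : ℕ → Ω → ℝ :=
    fun i ω => 𝒜 ^ i * (K * z (k - (i:ℤ)) ω + c * e (k - 1 - (i:ℤ)) ω) with hf
  -- basic measurability and integrability facts
  have hzm : ∀ a : ℤ, AEStronglyMeasurable (z a) μ := fun a => (hzL2 a).1
  have hem : ∀ a : ℤ, AEMeasurable (e a) μ := by
    intro a
    by_contra h
    have h0 := Measure.map_of_not_aemeasurable (f := e a) (μ := μ) h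
    rw [helaw a] at h0
    exact (IsProbabilityMeasure.ne_zero (gaussianReal 0 (σe ^ 2).toNNReal)) h0
  have heL2 : ∀ a : ℤ, MemLp (e a) 2 μ := by
    intro a
    have h1 : MemLp (id : ℝ → ℝ) 2 (gaussianReal 0 (σe^2).toNNReal) := by
      rw [memLp_two_iff_integrable_sq aestronglyMeasurable_id]
      simpa [id] using aux_gauss_integrable_sq (σe^2).toNNReal
    have h2 : MemLp (id : ℝ → ℝ) 2 (Measure.map (e a) μ) := by rw [helaw a]; exact h1
    have := (memLp_map_measure_iff aestronglyMeasurable_id (hem a)).1 h2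
    simpa [Function.comp] using this
  have hInt : ∀ (F G : Ω → ℝ), MemLp F 2 μ → MemLp G 2 μ →
      Integrable (fun ω => F ω * G ω) μ := by
    intro F G hF hG
    have hFG : AEStronglyMeasurable (fun ω => F ω * G ω) μ := hF.1.mul hG.1
    have hb : Integrable (fun ω => F ω ^ 2 + G ω ^ 2) μ := hF.integrable_sq.add hG.integrable_sq
    apply hb.mono' hFG
    filter_upwards with ω
    have h1 : |F ω| * |G ω| ≤ F ω ^ 2 + G ω ^ 2 := by
      nlinarith [sq_nonneg (|F ω| - |G ω|), sq_abs (F ω), sq_abs (G ω), abs_nonneg (F ω),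
        abs_nonneg (G ω)]
    simpa [Real.norm_eq_abs, abs_mul] using h1
  -- moments
  have hemean : ∀ a : ℤ, ∫ ω, e a ω ∂μ = 0 := by
    intro a
    have h1 := integral_map (hem a) (aestronglyMeasurable_id (α := ℝ))
    simp only [id] at h1
    rw [← h1, helaw a]
    exact aux_gauss_integral_id _
  have hesq : ∀ a : ℤ, ∫ ω, e a ω * e a ω ∂μ = σe ^ 2 := by
    intro a
    have hm : AEStronglyMeasurable (fun x : ℝ => x * x) (Measure.map (e a) μ) :=
      (measurable_id.mul measurable_id).aestronglyMeasurable
    have h1 := integral_map (hem a) hm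
    rw [← h1, helaw a]
    have h2 : (fun x : ℝ => x * x) = fun x : ℝ => x ^ 2 := by funext x; ring
    rw [h2, aux_gauss_integral_sq]
    exact Real.coe_toNNReal _ (sq_nonneg σe)
  have hzmean : ∀ a : ℤ, ∫ ω, z a ω ∂μ = 0 := by
    intro a
    obtain ⟨v, hv⟩ := hzgauss {a} (fun _ => 1)
    have hfun : (fun ω => ∑ i ∈ ({a} : Finset ℤ), (1:ℝ) * z i ω) = z a := by
      funext ω; simp
    rw [hfun] at hv
    have h1 := integral_map (hzm a).aemeasurable (aestronglyMeasurable_id (α := ℝ))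
    simp only [id] at h1
    rw [← h1, hv]
    exact aux_gauss_integral_id v
  have hzz : ∀ a b : ℤ, ∫ ω, z a ω * z b ω ∂μ = ρ ^ ((a - b).natAbs) * σz ^ 2 := by
    intro a b
    rcases le_total b a with h | h
    · have hj : a - (((a - b).natAbs : ℕ) : ℤ) = b := by omega
      have h2 := hzcov a (a - b).natAbs
      rwa [hj] at h2
    · have hj : b - (((a - b).natAbs : ℕ) : ℤ) = a := by omega
      have h2 := hzcov b (a - b).natAbs
      rw [hj] at h2
      rw [← h2]
      congr 1; funext ω; ring
  have hzeind : ∀ a b : ℤ, IndepFun (z a) (e b) μ :=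
    fun a b => hze.comp (measurable_pi_apply a) (measurable_pi_apply b)
  have hze0 : ∀ a b : ℤ, ∫ ω, z a ω * e b ω ∂μ = 0 := by
    intro a b
    rw [(hzeind a b).integral_fun_mul_eq_mul_integral (hzm a) (hem b).aestronglyMeasurable, hemean b, mul_zero]
  have hee0 : ∀ a b : ℤ, a ≠ b → ∫ ω, e a ω * e b ω ∂μ = 0 := by
    intro a b hab
    rw [(heindep.indepFun hab).integral_fun_mul_eq_mul_integral (hem a).aestronglyMeasurable
      (hem b).aestronglyMeasurable, hemean a, zero_mul]
  have hfL2 : ∀ i : ℕ, MemLp (f i) 2 μ := by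
    intro i
    apply MemLp.const_mul
    exact ((hzL2 _).const_mul K).add ((heL2 _).const_mul c)
  -- the covariance of the series terms
  have hI : ∀ i j : ℕ, ∫ ω, f i ω * f j ω ∂μ
      = 𝒜 ^ (i + j) * ((K ^ 2 * σz ^ 2) * ρ ^ (((i:ℤ) - (j:ℤ)).natAbs)
        + if i = j then c ^ 2 * σe ^ 2 else 0) := by
    intro i j
    have hexp : (fun ω => f i ω * f j ω) = fun ω =>
        𝒜 ^ (i+j) * ((K*K) * (z (k - (i:ℤ)) ω * z (k - (j:ℤ)) ω)) +
          (𝒜 ^ (i+j) * ((K*c) * (z (k - (i:ℤ)) ω * e (k - 1 - (j:ℤ)) ω))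
          + (𝒜 ^ (i+j) * ((c*K) * (z (k - (j:ℤ)) ω * e (k - 1 - (i:ℤ)) ω))
          + 𝒜 ^ (i+j) * ((c*c) * (e (k - 1 - (i:ℤ)) ω * e (k - 1 - (j:ℤ)) ω)))) := by
      funext ω; rw [hf]; simp only; rw [pow_add]; ring
    have I1 : Integrable (fun ω =>
        𝒜 ^ (i+j) * ((K*K) * (z (k - (i:ℤ)) ω * z (k - (j:ℤ)) ω))) μ :=
      ((hInt _ _ (hzL2 _) (hzL2 _)).const_mul _).const_mul _
    have I2 : Integrable (fun ω =>
        𝒜 ^ (i+j) * ((K*c) * (z (k - (i:ℤ)) ω * e (k - 1 - (j:ℤ)) ω))) μ :=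
      ((hInt _ _ (hzL2 _) (heL2 _)).const_mul _).const_mul _
    have I3 : Integrable (fun ω =>
        𝒜 ^ (i+j) * ((c*K) * (z (k - (j:ℤ)) ω * e (k - 1 - (i:ℤ)) ω))) μ :=
      ((hInt _ _ (hzL2 _) (heL2 _)).const_mul _).const_mul _
    have I4 : Integrable (fun ω =>
        𝒜 ^ (i+j) * ((c*c) * (e (k - 1 - (i:ℤ)) ω * e (k - 1 - (j:ℤ)) ω))) μ :=
      ((hInt _ _ (heL2 _) (heL2 _)).const_mul _).const_mul _
    have I34 : Integrable (fun ω =>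
        𝒜 ^ (i+j) * ((c*K) * (z (k - (j:ℤ)) ω * e (k - 1 - (i:ℤ)) ω))
        + 𝒜 ^ (i+j) * ((c*c) * (e (k - 1 - (i:ℤ)) ω * e (k - 1 - (j:ℤ)) ω))) μ := I3.add I4
    have I234 : Integrable (fun ω =>
        𝒜 ^ (i+j) * ((K*c) * (z (k - (i:ℤ)) ω * e (k - 1 - (j:ℤ)) ω))
        + (𝒜 ^ (i+j) * ((c*K) * (z (k - (j:ℤ)) ω * e (k - 1 - (i:ℤ)) ω))
          + 𝒜 ^ (i+j) * ((c*c) * (e (k - 1 - (i:ℤ)) ω * e (k - 1 - (j:ℤ)) ω)))) μ :=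
      I2.add I34
    rw [hexp, integral_add I1 I234, integral_add I2 I34, integral_add I3 I4,
      integral_const_mul, integral_const_mul, integral_const_mul, integral_const_mul,
      integral_const_mul, integral_const_mul, integral_const_mul, integral_const_mul]
    have hn : ((k - (i:ℤ)) - (k - (j:ℤ))).natAbs = ((i:ℤ) - (j:ℤ)).natAbs := by omega
    rw [hzz, hn, hze0, hze0]
    rcases eq_or_ne i j with hij | hij
    · subst hij
      rw [if_pos rfl, hesq]
      ring
    · rw [if_neg hij, hee0 _ _ (fun h => hij (by omega))]
      ring
  -- quantitative L² bounds
  have hrpow : ∀ x : ℝ≥0∞, x ^ (2:ℝ) = x ^ (2:ℕ) := fun x => by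
    rw [show (2:ℝ) = ((2:ℕ):ℝ) by norm_num, ENNReal.rpow_natCast]
  set Msq : ℝ := 2*K^2*σz^2 + 2*c^2*σe^2 with hMsq
  have hMsq0 : 0 ≤ Msq := by rw [hMsq]; positivity
  set δ : ℕ → ℝ≥0∞ := fun i => (∫⁻ ω, (‖f i ω‖₊ : ℝ≥0∞) ^ (2:ℝ) ∂μ) ^ (1/2 : ℝ) with hδdef
  have hz2 : ∀ a : ℤ, ∫ ω, z a ω ^ 2 ∂μ = σz ^ 2 := by
    intro a
    have h := hzz a a
    rw [sub_self] at h
    simp only [Int.natAbs_zero, pow_zero, one_mul] at h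
    rw [← h]
    congr 1; funext ω; ring
  have he2 : ∀ a : ℤ, ∫ ω, e a ω ^ 2 ∂μ = σe ^ 2 := by
    intro a
    rw [← hesq a]
    congr 1; funext ω; ring
  have hδ2 : ∀ i : ℕ, ∫⁻ ω, (‖f i ω‖₊ : ℝ≥0∞) ^ (2:ℝ) ∂μ ≤ ENNReal.ofReal (𝒜^(2*i) * Msq) := by
    intro i
    have hptw : ∀ ω, (‖f i ω‖₊ : ℝ≥0∞) ^ (2:ℝ) = ENNReal.ofReal (f i ω ^ 2) := by
      intro ω
      rw [hrpow, ← enorm_eq_nnnorm, Real.enorm_eq_ofReal_abs, ← ENNReal.ofReal_pow (abs_nonneg _), sq_abs]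
    have hIntSum : Integrable (fun ω =>
        2*K^2 * z (k - (i:ℤ)) ω ^ 2 + 2*c^2 * e (k - 1 - (i:ℤ)) ω ^ 2) μ :=
      ((hzL2 _).integrable_sq.const_mul _).add ((heL2 _).integrable_sq.const_mul _)
    calc ∫⁻ ω, (‖f i ω‖₊ : ℝ≥0∞) ^ (2:ℝ) ∂μ
        = ∫⁻ ω, ENNReal.ofReal (f i ω ^ 2) ∂μ := lintegral_congr hptw
      _ ≤ ∫⁻ ω, ENNReal.ofReal (𝒜^(2*i) *
            (2*K^2 * z (k - (i:ℤ)) ω ^ 2 + 2*c^2 * e (k - 1 - (i:ℤ)) ω ^ 2)) ∂μ := by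
          apply lintegral_mono
          intro ω
          apply ENNReal.ofReal_le_ofReal
          have h1 : f i ω ^ 2
              = (𝒜^i)^2 * (K * z (k - (i:ℤ)) ω + c * e (k - 1 - (i:ℤ)) ω)^2 := by
            rw [hf]; simp only; ring
          have h2 : (K * z (k - (i:ℤ)) ω + c * e (k - 1 - (i:ℤ)) ω)^2
              ≤ 2*K^2 * z (k - (i:ℤ)) ω ^ 2 + 2*c^2 * e (k - 1 - (i:ℤ)) ω ^ 2 := by
            nlinarith [sq_nonneg (K * z (k - (i:ℤ)) ω - c * e (k - 1 - (i:ℤ)) ω)]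
          have h3 : (𝒜^i)^2 = 𝒜^(2*i) := by rw [← pow_mul, mul_comm]
          calc f i ω ^ 2 = (𝒜^i)^2 * (K * z (k - (i:ℤ)) ω + c * e (k - 1 - (i:ℤ)) ω)^2 := h1
            _ ≤ (𝒜^i)^2 * (2*K^2 * z (k - (i:ℤ)) ω ^ 2 + 2*c^2 * e (k - 1 - (i:ℤ)) ω ^ 2) :=
                mul_le_mul_of_nonneg_left h2 (sq_nonneg _)
            _ = 𝒜^(2*i) * (2*K^2 * z (k - (i:ℤ)) ω ^ 2 + 2*c^2 * e (k - 1 - (i:ℤ)) ω ^ 2) := by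
                rw [h3]
      _ = ENNReal.ofReal (∫ ω, 𝒜^(2*i) *
            (2*K^2 * z (k - (i:ℤ)) ω ^ 2 + 2*c^2 * e (k - 1 - (i:ℤ)) ω ^ 2) ∂μ) := by
          rw [ofReal_integral_eq_lintegral_ofReal (hIntSum.const_mul _)]
          filter_upwards with ω
          have h4 : (0:ℝ) ≤ 𝒜^(2*i) := by rw [mul_comm 2 i, pow_mul]; positivity
          have h5 : (0:ℝ) ≤ 2*K^2 * z (k - (i:ℤ)) ω ^ 2 + 2*c^2 * e (k - 1 - (i:ℤ)) ω ^ 2 := by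
            positivity
          exact mul_nonneg h4 h5
      _ = ENNReal.ofReal (𝒜^(2*i) * Msq) := by
          rw [integral_const_mul, integral_add ((hzL2 _).integrable_sq.const_mul _)
            ((heL2 _).integrable_sq.const_mul _), integral_const_mul, integral_const_mul,
            hz2, he2, hMsq]
  have hδle : ∀ i : ℕ, δ i ≤ ENNReal.ofReal (Real.sqrt Msq) * (ENNReal.ofReal |𝒜|)^i := by
    intro i
    have habs2 : ∀ n : ℕ, (|𝒜|^n)^2 = 𝒜^(2*n) := fun n => by
      rw [← pow_mul, mul_comm n 2, pow_mul, sq_abs, ← pow_mul]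
    have hxeq : ENNReal.ofReal (𝒜^(2*i) * Msq)
        = (ENNReal.ofReal (|𝒜|^i * Real.sqrt Msq)) ^ (2:ℝ) := by
      rw [hrpow, ← ENNReal.ofReal_pow (p := |𝒜|^i * Real.sqrt Msq) (by positivity) 2]
      congr 1
      rw [mul_pow, Real.sq_sqrt hMsq0, habs2]
    have h1 : δ i ≤ ((ENNReal.ofReal (|𝒜|^i * Real.sqrt Msq)) ^ (2:ℝ)) ^ (1/2:ℝ) := by
      rw [hδdef]; simp only
      rw [← hxeq]
      exact ENNReal.rpow_le_rpow (hδ2 i) (by norm_num)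
    rw [← ENNReal.rpow_mul] at h1
    norm_num at h1
    calc δ i ≤ ENNReal.ofReal (|𝒜|^i * Real.sqrt Msq) := by
          rw [ENNReal.ofReal_mul (by positivity), ENNReal.ofReal_pow (abs_nonneg _)]; exact h1
      _ = ENNReal.ofReal (Real.sqrt Msq) * (ENNReal.ofReal |𝒜|)^i := by
          rw [ENNReal.ofReal_mul (by positivity), ENNReal.ofReal_pow (abs_nonneg _), mul_comm]
  have hδsum : ∑' i, δ i ≠ ⊤ := by
    have hle : ∑' i, δ i ≤ ENNReal.ofReal (Real.sqrt Msq) * (1 - ENNReal.ofReal |𝒜|)⁻¹ := by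
      calc ∑' i, δ i ≤ ∑' i, ENNReal.ofReal (Real.sqrt Msq) * (ENNReal.ofReal |𝒜|)^i :=
            ENNReal.tsum_le_tsum hδle
        _ = ENNReal.ofReal (Real.sqrt Msq) * ∑' i, (ENNReal.ofReal |𝒜|)^i :=
            ENNReal.tsum_mul_left
        _ = _ := by rw [ENNReal.tsum_geometric]
    apply ne_top_of_le_ne_top _ hle
    apply ENNReal.mul_ne_top ENNReal.ofReal_ne_top
    rw [ENNReal.inv_ne_top]
    have hlt : ENNReal.ofReal |𝒜| < 1 := by
      rw [show (1:ℝ≥0∞) = ENNReal.ofReal 1 by simp]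
      exact ENNReal.ofReal_lt_ofReal_iff_of_nonneg (abs_nonneg _) |>.2 h𝒜
    exact (tsub_pos_of_lt hlt).ne'
  -- Cauchy-Schwarz
  have hCS : ∀ (F G : Ω → ℝ), AEStronglyMeasurable F μ → AEStronglyMeasurable G μ →
      ∫⁻ ω, (‖F ω * G ω‖₊ : ℝ≥0∞) ∂μ ≤
        (∫⁻ ω, (‖F ω‖₊ : ℝ≥0∞) ^ (2:ℝ) ∂μ) ^ (1/2 : ℝ)
          * (∫⁻ ω, (‖G ω‖₊ : ℝ≥0∞) ^ (2:ℝ) ∂μ) ^ (1/2 : ℝ) := by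
    intro F G hF hG
    have hpq : Real.HolderConjugate 2 2 := ⟨by norm_num, by norm_num, by norm_num⟩
    have h := ENNReal.lintegral_mul_le_Lp_mul_Lq μ hpq hF.enorm hG.enorm
    simp only [Pi.mul_apply] at h
    calc ∫⁻ ω, (‖F ω * G ω‖₊ : ℝ≥0∞) ∂μ
        = ∫⁻ ω, (‖F ω‖₊ : ℝ≥0∞) * (‖G ω‖₊ : ℝ≥0∞) ∂μ := by
          apply lintegral_congr
          intro ω
          rw [nnnorm_mul, ENNReal.coe_mul]
      _ ≤ _ := h
  have hδL1 : ∀ i : ℕ, ∫⁻ ω, (‖f i ω‖₊ : ℝ≥0∞) ∂μ ≤ δ i := by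
    intro i
    have h := hCS (f i) (fun _ => (1:ℝ)) (hfL2 i).1 aestronglyMeasurable_const
    simp only [mul_one, nnnorm_one, ENNReal.coe_one, ENNReal.one_rpow, lintegral_one,
      measure_univ, ENNReal.one_rpow] at h
    rw [hδdef]
    simpa using h
  -- a.e. summability of the series
  have hsummae : ∀ᵐ ω ∂μ, Summable (fun i => f i ω) := by
    have hmeas : ∀ i : ℕ, AEMeasurable (fun ω => (‖f i ω‖₊ : ℝ≥0∞)) μ :=
      fun i => (hfL2 i).1.enorm
    have hlt : ∫⁻ ω, ∑' i, (‖f i ω‖₊ : ℝ≥0∞) ∂μ ≠ ⊤ := by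
      rw [lintegral_tsum hmeas]
      exact ne_top_of_le_ne_top hδsum (ENNReal.tsum_le_tsum hδL1)
    have hae := ae_lt_top' (AEMeasurable.ennreal_tsum hmeas) hlt
    filter_upwards [hae] with ω hω
    exact (ENNReal.tsum_coe_ne_top_iff_summable.1 hω.ne).of_nnnorm
  -- pointwise expansion of the square
  have hsq : ∀ᵐ ω ∂μ, (xhat k ω)^2 = ∑' p : ℕ×ℕ, f p.1 ω * f p.2 ω := by
    filter_upwards [hsummae] with ω hω
    have hn : Summable (fun i => ‖f i ω‖) := summable_norm_iff.mpr hω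
    have hx : xhat k ω = ∑' i, f i ω := hxhat k ω
    rw [hx, pow_two]
    exact tsum_mul_tsum_of_summable_norm hn hn
  -- swap integral and sum
  have hswap : ∫ ω, (xhat k ω)^2 ∂μ = ∑' p : ℕ×ℕ, ∫ ω, f p.1 ω * f p.2 ω ∂μ := by
    rw [integral_congr_ae hsq]
    apply integral_tsum
    · exact fun p => (hfL2 p.1).1.mul (hfL2 p.2).1
    · have hb : ∀ p : ℕ×ℕ, ∫⁻ ω, (‖f p.1 ω * f p.2 ω‖₊ : ℝ≥0∞) ∂μ ≤ δ p.1 * δ p.2 :=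
        fun p => hCS _ _ (hfL2 p.1).1 (hfL2 p.2).1
      have hps : ∑' p : ℕ×ℕ, δ p.1 * δ p.2 = (∑' i, δ i) * (∑' i, δ i) := by
        rw [ENNReal.tsum_prod']
        simp_rw [ENNReal.tsum_mul_left]
        rw [ENNReal.tsum_mul_right]
      apply ne_top_of_le_ne_top _ (ENNReal.tsum_le_tsum hb)
      rw [hps]
      exact ENNReal.mul_ne_top hδsum hδsum
  rw [hswap, tsum_congr (fun p : ℕ×ℕ => hI p.1 p.2),
    aux_tsum h𝒜 hρ (K^2*σz^2) (c^2*σe^2), hc]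
  ring
end

section
/- Let μ₁ be the centered bivariate Gaussian measure on ℝ² with covariance matrix [[σ̃², λ σ̃ σ_e], [λ σ̃ σ_e, σ_e²]] and let μ₀ = N(0, σ_γ²) ⊗ N(0, σ_e²) be the product of two centered real Gaussian measures. Then the Kullback–Leibler divergence satisfies D(μ₁ ‖ μ₀) = (1/2) log(1/(1 − λ²)) + (1/2)( σ̃²/σ_γ² − 1 − log(σ̃²/σ_γ²) ). -/
open MeasureTheory ProbabilityTheory

/-- The Kullback–Leibler divergence `D(μ ‖ ν) = ∫ log(dμ/dν) dμ`. -/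
noncomputable def klDivR {α : Type*} [MeasurableSpace α] (μ ν : Measure α) : ℝ :=
  ∫ x, Real.log (μ.rnDeriv ν x).toReal ∂μ

/-- The centered bivariate Gaussian measure on `ℝ²` with covariance matrix
`[[s1², l·s1·s2], [l·s1·s2, s2²]]` (standard deviations `s1, s2 > 0`,
correlation coefficient `l`), given by its density with respect to the
Lebesgue measure on `ℝ²`. -/
noncomputable def bivGaussian (s1 s2 l : ℝ) : Measure (ℝ × ℝ) :=
  (volume : Measure (ℝ × ℝ)).withDensity fun p =>
    ENNReal.ofReal ((2 * Real.pi * s1 * s2 * Real.sqrt (1 - l ^ 2))⁻¹ *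
      Real.exp (-(2 * (1 - l ^ 2))⁻¹ *
        ((p.1 / s1) ^ 2 - 2 * l * (p.1 / s1) * (p.2 / s2) + (p.2 / s2) ^ 2)))

open Real
open scoped ENNReal NNReal

namespace KLBiv

lemma t_exp_le (t : ℝ) : t * rexp (-t) ≤ rexp (-1) := by
  have h : t ≤ rexp (t - 1) := by linarith [Real.add_one_le_exp (t - 1)]
  have h2 := mul_le_mul_of_nonneg_right h (Real.exp_pos (-t)).le
  rwa [← Real.exp_add, show t - 1 + -t = -1 by ring] at h2

lemma sq_exp_le {c : ℝ} (hc : 0 < c) (x : ℝ) :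
    x ^ 2 * rexp (-c * x ^ 2) ≤ c⁻¹ * rexp (-1) := by
  have h := t_exp_le (c * x ^ 2)
  rw [show -(c * x ^ 2) = -c * x ^ 2 by ring] at h
  have h2 := mul_le_mul_of_nonneg_left h (inv_nonneg.mpr hc.le)
  calc x ^ 2 * rexp (-c * x ^ 2) = c⁻¹ * (c * x ^ 2 * rexp (-c * x ^ 2)) := by
        field_simp
      _ ≤ c⁻¹ * rexp (-1) := h2

lemma abs_le_one_add_pow4 (x : ℝ) : |x| ≤ 1 + x ^ 4 := by
  have h4 : |x| ^ 4 = x ^ 4 := by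
    rw [← abs_pow]; exact abs_of_nonneg (by positivity)
  rcases le_total |x| 1 with h | h
  · nlinarith [abs_nonneg x, pow_nonneg (abs_nonneg x) 4]
  · have : |x| ≤ |x| ^ 4 := le_self_pow₀ h (by norm_num)
    nlinarith

lemma sq_le_one_add_pow4 (x : ℝ) : x ^ 2 ≤ 1 + x ^ 4 := by
  nlinarith [sq_nonneg (x ^ 2 - 1), sq_nonneg x]

lemma cube_abs_le_one_add_pow4 (x : ℝ) : |x| ^ 3 ≤ 1 + x ^ 4 := by
  have h4 : |x| ^ 4 = x ^ 4 := by
    rw [← abs_pow]; exact abs_of_nonneg (by positivity)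
  rcases le_total |x| 1 with h | h
  · have := pow_le_one₀ (abs_nonneg x) h (n := 3)
    nlinarith [pow_nonneg (abs_nonneg x) 4]
  · have : |x| ^ 3 ≤ |x| ^ 4 := pow_le_pow_right₀ h (by norm_num)
    nlinarith

lemma integrable_one_add_pow4 {c : ℝ} (hc : 0 < c) :
    Integrable (fun x : ℝ => (1 + x ^ 4) * rexp (-c * x ^ 2)) := by
  have h1 : Integrable (fun x : ℝ => rexp (-c * x ^ 2)) := integrable_exp_neg_mul_sq hc
  have h2 : Integrable (fun x : ℝ => x ^ 4 * rexp (-c * x ^ 2)) := by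
    have hI : Integrable (fun x : ℝ => ((c / 4)⁻¹ * rexp (-1)) ^ 2 * rexp (-(c / 2) * x ^ 2)) :=
      (integrable_exp_neg_mul_sq (by linarith)).const_mul _
    refine hI.mono' (Continuous.aestronglyMeasurable (by continuity)) ?_
    filter_upwards with x
    have hexp : rexp (-(c / 4) * x ^ 2) * rexp (-(c / 4) * x ^ 2) * rexp (-(c / 2) * x ^ 2)
        = rexp (-c * x ^ 2) := by
      rw [← Real.exp_add, ← Real.exp_add]; congr 1; ring
    have e1 : x ^ 4 * rexp (-c * x ^ 2)
        = (x ^ 2 * rexp (-(c / 4) * x ^ 2)) ^ 2 * rexp (-(c / 2) * x ^ 2) := by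
      rw [← hexp]; ring
    have hb := sq_exp_le (show (0 : ℝ) < c / 4 by linarith) x
    have hb2 : (x ^ 2 * rexp (-(c / 4) * x ^ 2)) ^ 2 ≤ ((c / 4)⁻¹ * rexp (-1)) ^ 2 :=
      pow_le_pow_left₀ (by positivity) hb 2
    have : x ^ 4 * rexp (-c * x ^ 2) ≤ ((c / 4)⁻¹ * rexp (-1)) ^ 2 * rexp (-(c / 2) * x ^ 2) := by
      rw [e1]
      exact mul_le_mul_of_nonneg_right hb2 (Real.exp_pos _).le
    rw [Real.norm_eq_abs, abs_of_nonneg (by positivity)]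
    exact this
  have := h1.add h2
  refine this.congr ?_
  filter_upwards with x
  simp only [Pi.add_apply]
  ring

lemma integrable_poly_exp {c : ℝ} (hc : 0 < c) {g : ℝ → ℝ} (hgc : Continuous g) {C : ℝ}
    (hg : ∀ x, |g x| ≤ C * (1 + x ^ 4)) :
    Integrable (fun x => g x * rexp (-c * x ^ 2)) := by
  refine (((integrable_one_add_pow4 hc).const_mul C).mono'
    ((hgc.mul (by continuity)).aestronglyMeasurable) ?_)
  filter_upwards with x
  rw [Real.norm_eq_abs, abs_mul, abs_of_nonneg (Real.exp_pos _).le]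
  calc |g x| * rexp (-c * x ^ 2) ≤ (C * (1 + x ^ 4)) * rexp (-c * x ^ 2) :=
        mul_le_mul_of_nonneg_right (hg x) (Real.exp_pos _).le
      _ = C * ((1 + x ^ 4) * rexp (-c * x ^ 2)) := by ring

lemma I1 {c : ℝ} : ∫ x : ℝ, x * rexp (-c * x ^ 2) = 0 := by
  have h := integral_neg_eq_self (fun x : ℝ => x * rexp (-c * x ^ 2)) volume
  simp only [neg_sq, neg_mul, integral_neg] at h
  simp_rw [neg_mul]
  linarith

lemma I2 {c : ℝ} (hc : 0 < c) :
    ∫ x : ℝ, x ^ 2 * rexp (-c * x ^ 2) = Real.sqrt (π / c) / (2 * c) := by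
  have habs := integral_comp_abs (f := fun t : ℝ => t ^ 2 * rexp (-c * t ^ 2))
  simp only [sq_abs] at habs
  have hIoi : ∫ x in Set.Ioi (0 : ℝ), x ^ 2 * rexp (-c * x ^ 2)
      = c ^ (-(3 : ℝ) / 2) * (1 / 2) * Real.Gamma (3 / 2) := by
    have h := integral_rpow_mul_exp_neg_mul_rpow (p := 2) (q := 2) two_pos (by norm_num) hc
    rw [show ((2 : ℝ) + 1) / 2 = 3 / 2 by norm_num, show (-((2 : ℝ) + 1) / 2) = -(3 : ℝ) / 2
      by norm_num] at h
    rw [← h]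
    refine setIntegral_congr_fun measurableSet_Ioi (fun x _ => ?_)
    norm_cast
  have hG : Real.Gamma (3 / 2 : ℝ) = Real.sqrt π / 2 := by
    rw [show (3 / 2 : ℝ) = 1 / 2 + 1 by norm_num, Real.Gamma_add_one (by norm_num),
      Real.Gamma_one_half_eq]
    ring
  rw [habs, hIoi, hG]
  have hrw : c ^ (-(3 : ℝ) / 2) = c⁻¹ * (Real.sqrt c)⁻¹ := by
    rw [show (-(3 : ℝ) / 2) = (-1) + (-(1 / 2)) by norm_num, Real.rpow_add hc,
      Real.rpow_neg_one, Real.rpow_neg hc.le, Real.sqrt_eq_rpow]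
  rw [hrw, Real.sqrt_div pi_pos.le]
  have hsc : Real.sqrt c ≠ 0 := (Real.sqrt_pos.mpr hc).ne'
  field_simp

noncomputable def gd (m v x : ℝ) : ℝ :=
  (Real.sqrt (2 * π * v))⁻¹ * rexp (-(x - m) ^ 2 / (2 * v))

lemma gd_pos {v : ℝ} (hv : 0 < v) (m x : ℝ) : 0 < gd m v x := by
  unfold gd; positivity

lemma gd_nonneg {v : ℝ} (hv : 0 < v) (m x : ℝ) : 0 ≤ gd m v x := (gd_pos hv m x).le

lemma gd_cont {v : ℝ} : Continuous (fun p : ℝ × ℝ => gd p.1 v p.2) := by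
  unfold gd; fun_prop

lemma gd_cont1 {v m : ℝ} : Continuous (gd m v) := by
  unfold gd; fun_prop

lemma gd_shift_eq {v m : ℝ} (x : ℝ) : gd 0 v (x - m) = gd m v x := by
  unfold gd; norm_num

lemma gd0_eq {v : ℝ} (hv : 0 < v) (x : ℝ) :
    gd 0 v x = (Real.sqrt (2 * π * v))⁻¹ * rexp (-(2 * v)⁻¹ * x ^ 2) := by
  unfold gd
  congr 2
  field_simp
  ring

lemma norm_const {v : ℝ} (hv : 0 < v) :
    (Real.sqrt (2 * π * v))⁻¹ * Real.sqrt (π / (2 * v)⁻¹) = 1 := by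
  rw [show π / (2 * v)⁻¹ = 2 * π * v by field_simp]
  exact inv_mul_cancel₀ (by positivity)

-- centered integrability
lemma c_int {v : ℝ} (hv : 0 < v) : Integrable (gd 0 v) := by
  have h2v : (0 : ℝ) < (2 * v)⁻¹ := by positivity
  have := (integrable_exp_neg_mul_sq h2v).const_mul (Real.sqrt (2 * π * v))⁻¹
  refine this.congr ?_
  filter_upwards with x
  rw [gd0_eq hv]

lemma c_int1 {v : ℝ} (hv : 0 < v) : Integrable (fun x => x * gd 0 v x) := by
  have h2v : (0 : ℝ) < (2 * v)⁻¹ := by positivity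
  have := integrable_poly_exp h2v (g := fun x => x * (Real.sqrt (2 * π * v))⁻¹)
    (by fun_prop) (C := (Real.sqrt (2 * π * v))⁻¹)
    (fun x => by
      rw [abs_mul, abs_of_nonneg (inv_nonneg.mpr (Real.sqrt_nonneg _)), mul_comm]
      exact mul_le_mul_of_nonneg_left (abs_le_one_add_pow4 x)
        (inv_nonneg.mpr (Real.sqrt_nonneg _)))
  refine this.congr ?_
  filter_upwards with x
  rw [gd0_eq hv]
  ring

lemma c_int2 {v : ℝ} (hv : 0 < v) : Integrable (fun x => x ^ 2 * gd 0 v x) := by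
  have h2v : (0 : ℝ) < (2 * v)⁻¹ := by positivity
  have := integrable_poly_exp h2v (g := fun x => x ^ 2 * (Real.sqrt (2 * π * v))⁻¹)
    (by fun_prop) (C := (Real.sqrt (2 * π * v))⁻¹)
    (fun x => by
      rw [abs_mul, abs_of_nonneg (inv_nonneg.mpr (Real.sqrt_nonneg _)), mul_comm,
        abs_of_nonneg (sq_nonneg x)]
      exact mul_le_mul_of_nonneg_left (sq_le_one_add_pow4 x)
        (inv_nonneg.mpr (Real.sqrt_nonneg _)))
  refine this.congr ?_
  filter_upwards with x
  rw [gd0_eq hv]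
  ring

lemma c_val0 {v : ℝ} (hv : 0 < v) : ∫ x, gd 0 v x = 1 := by
  have h2v : (0 : ℝ) < (2 * v)⁻¹ := by positivity
  simp_rw [gd0_eq hv]
  rw [integral_const_mul, integral_gaussian, norm_const hv]

lemma c_val1 {v : ℝ} (hv : 0 < v) : ∫ x, x * gd 0 v x = 0 := by
  simp_rw [gd0_eq hv]
  have : ∀ x : ℝ, x * ((Real.sqrt (2 * π * v))⁻¹ * rexp (-(2 * v)⁻¹ * x ^ 2))
      = (Real.sqrt (2 * π * v))⁻¹ * (x * rexp (-(2 * v)⁻¹ * x ^ 2)) := fun x => by ring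
  simp_rw [this]
  rw [integral_const_mul, I1, mul_zero]

lemma c_val2 {v : ℝ} (hv : 0 < v) : ∫ x, x ^ 2 * gd 0 v x = v := by
  have h2v : (0 : ℝ) < (2 * v)⁻¹ := by positivity
  simp_rw [gd0_eq hv]
  have : ∀ x : ℝ, x ^ 2 * ((Real.sqrt (2 * π * v))⁻¹ * rexp (-(2 * v)⁻¹ * x ^ 2))
      = (Real.sqrt (2 * π * v))⁻¹ * (x ^ 2 * rexp (-(2 * v)⁻¹ * x ^ 2)) := fun x => by ring
  simp_rw [this]
  rw [integral_const_mul, I2 h2v]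
  rw [show (Real.sqrt (2 * π * v))⁻¹ * (Real.sqrt (π / (2 * v)⁻¹) / (2 * (2 * v)⁻¹))
      = ((Real.sqrt (2 * π * v))⁻¹ * Real.sqrt (π / (2 * v)⁻¹)) / (2 * (2 * v)⁻¹) by ring,
    norm_const hv]
  field_simp

-- general mean versions
lemma gd_integrable {v : ℝ} (hv : 0 < v) (m : ℝ) : Integrable (gd m v) := by
  have := (c_int hv).comp_sub_right m
  refine this.congr ?_
  filter_upwards with x
  rw [gd_shift_eq]

lemma gd_int1 {v : ℝ} (hv : 0 < v) (m : ℝ) : Integrable (fun x => x * gd m v x) := by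
  have hbase : Integrable (fun t => (t + m) * gd 0 v t) := by
    have := ((c_int1 hv).add ((c_int hv).const_mul m))
    refine this.congr ?_
    filter_upwards with x
    simp only [Pi.add_apply]
    ring
  have := hbase.comp_sub_right m
  refine this.congr ?_
  filter_upwards with x
  rw [sub_add_cancel, gd_shift_eq]

lemma gd_int2 {v : ℝ} (hv : 0 < v) (m : ℝ) : Integrable (fun x => x ^ 2 * gd m v x) := by
  have hbase : Integrable (fun t => (t + m) ^ 2 * gd 0 v t) := by
    have := (((c_int2 hv).add ((c_int1 hv).const_mul (2 * m))).add
      ((c_int hv).const_mul (m ^ 2)))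
    refine this.congr ?_
    filter_upwards with x
    simp only [Pi.add_apply]
    ring
  have := hbase.comp_sub_right m
  refine this.congr ?_
  filter_upwards with x
  rw [sub_add_cancel, gd_shift_eq]

lemma gd_shift_int {v : ℝ} (h : ℝ → ℝ) (m : ℝ) :
    ∫ x, h x * gd m v x = ∫ x, h (x + m) * gd 0 v x := by
  have := integral_sub_right_eq_self (μ := volume) (fun x => h (x + m) * gd 0 v x) m
  rw [← this]
  congr 1
  ext x
  rw [sub_add_cancel, gd_shift_eq]

lemma gd_val0 {v : ℝ} (hv : 0 < v) (m : ℝ) : ∫ x, gd m v x = 1 := by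
  have := gd_shift_int (v := v) (fun _ => 1) m
  simp only [one_mul] at this
  rw [this, c_val0 hv]

lemma gd_val1 {v : ℝ} (hv : 0 < v) (m : ℝ) : ∫ x, x * gd m v x = m := by
  rw [gd_shift_int]
  have : ∀ x : ℝ, (x + m) * gd 0 v x = x * gd 0 v x + m * gd 0 v x := fun x => by ring
  simp_rw [this]
  rw [integral_add (c_int1 hv) ((c_int hv).const_mul m), c_val1 hv, integral_const_mul,
    c_val0 hv, zero_add, mul_one]

lemma gd_val2 {v : ℝ} (hv : 0 < v) (m : ℝ) : ∫ x, x ^ 2 * gd m v x = v + m ^ 2 := by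
  rw [gd_shift_int]
  have : ∀ x : ℝ, (x + m) ^ 2 * gd 0 v x
      = x ^ 2 * gd 0 v x + ((2 * m) * (x * gd 0 v x) + m ^ 2 * gd 0 v x) := fun x => by ring
  simp_rw [this]
  have hadd : Integrable (fun x => 2 * m * (x * gd 0 v x) + m ^ 2 * gd 0 v x) := by
    have := ((c_int1 hv).const_mul (2 * m)).add ((c_int hv).const_mul (m ^ 2))
    exact this
  rw [integral_add (c_int2 hv) hadd,
    integral_add ((c_int1 hv).const_mul (2 * m)) ((c_int hv).const_mul (m ^ 2)),
    integral_const_mul, integral_const_mul, c_val0 hv, c_val1 hv, c_val2 hv]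
  ring

lemma gd_abs_int {v : ℝ} (hv : 0 < v) (m : ℝ) : Integrable (fun x => |x| * gd m v x) := by
  refine (((gd_int2 hv m).add (gd_integrable hv m)).const_mul (1 / 2 : ℝ)).mono'
    ((continuous_abs.mul gd_cont1).aestronglyMeasurable) ?_
  filter_upwards with x
  rw [Real.norm_eq_abs, abs_mul, abs_of_nonneg (gd_nonneg hv m x), abs_abs]
  have h1 : |x| ≤ (1 + x ^ 2) / 2 := by nlinarith [sq_nonneg (|x| - 1), sq_abs x]
  have := mul_le_mul_of_nonneg_right h1 (gd_nonneg hv m x)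
  simp only [Pi.add_apply]
  nlinarith [gd_nonneg hv m x]

lemma gd_abs_le {v : ℝ} (hv : 0 < v) (m : ℝ) :
    ∫ x, |x| * gd m v x ≤ (1 + (v + m ^ 2)) / 2 := by
  have hle : ∀ x : ℝ, |x| * gd m v x
      ≤ (1 / 2 : ℝ) * ((x ^ 2 * gd m v x) + gd m v x) := by
    intro x
    have h1 : |x| ≤ (1 + x ^ 2) / 2 := by nlinarith [sq_nonneg (|x| - 1), sq_abs x]
    nlinarith [gd_nonneg hv m x, mul_le_mul_of_nonneg_right h1 (gd_nonneg hv m x)]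
  have := integral_mono (gd_abs_int hv m)
    (((gd_int2 hv m).add (gd_integrable hv m)).const_mul (1 / 2 : ℝ)) hle
  simp only [Pi.add_apply] at this
  rw [integral_const_mul, integral_add (gd_int2 hv m) (gd_integrable hv m),
    gd_val2 hv m, gd_val0 hv m] at this
  linarith

section TwoD

variable {a2 t2 k : ℝ}

lemma int2D (ha2 : 0 < a2) (ht2 : 0 < t2) (k : ℝ) (u w : ℝ → ℝ)
    (hu : Continuous u) (hw : Continuous w)
    (hwi : ∀ m, Integrable (fun y => w y * gd m t2 y))
    (W : ℝ → ℝ)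
    (hWle : ∀ m, ∫ y, |w y| * gd m t2 y ≤ W m)
    (hWint : Integrable (fun x => |u x| * gd 0 a2 x * W (k * x))) :
    Integrable (fun p : ℝ × ℝ => (u p.1 * gd 0 a2 p.1) * (w p.2 * gd (k * p.1) t2 p.2))
        ((volume : Measure ℝ).prod volume) ∧
      ∫ p, (u p.1 * gd 0 a2 p.1) * (w p.2 * gd (k * p.1) t2 p.2)
          ∂((volume : Measure ℝ).prod volume)
        = ∫ x, u x * gd 0 a2 x * ∫ y, w y * gd (k * x) t2 y := by
  set F : ℝ × ℝ → ℝ := fun p => (u p.1 * gd 0 a2 p.1) * (w p.2 * gd (k * p.1) t2 p.2) with hF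
  have hcont : Continuous F := by
    have h : Continuous fun p : ℝ × ℝ =>
        (u p.1 * gd 0 a2 p.1) * (w p.2 * gd (k * p.1) t2 p.2) := by
      unfold gd; fun_prop
    exact hF ▸ h
  have hmeas := hcont.aestronglyMeasurable (μ := (volume : Measure ℝ).prod volume)
  have hnorm : ∀ x : ℝ, (∫ y, ‖F (x, y)‖)
      = |u x| * gd 0 a2 x * ∫ y, |w y| * gd (k * x) t2 y := by
    intro x
    rw [← integral_const_mul]
    congr 1 with y
    rw [Real.norm_eq_abs, hF]
    simp only
    rw [abs_mul, abs_mul, abs_mul, abs_of_nonneg (gd_nonneg ha2 0 x),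
      abs_of_nonneg (gd_nonneg ht2 (k * x) y)]
    try ring
  have hint : Integrable F ((volume : Measure ℝ).prod volume) := by
    rw [integrable_prod_iff hmeas]
    constructor
    · filter_upwards with x
      exact (hwi (k * x)).const_mul (u x * gd 0 a2 x)
    · refine hWint.mono'
        ((hcont.norm.stronglyMeasurable.integral_prod_right').aestronglyMeasurable) ?_
      filter_upwards with x
      rw [Real.norm_eq_abs, abs_of_nonneg (integral_nonneg (fun y => norm_nonneg _)), hnorm x]
      have h1 : (0 : ℝ) ≤ |u x| * gd 0 a2 x := mul_nonneg (abs_nonneg _) (gd_nonneg ha2 0 x)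
      exact mul_le_mul_of_nonneg_left (hWle (k * x)) h1
  refine ⟨hint, ?_⟩
  rw [integral_prod F hint]
  congr 1 with x
  rw [← integral_const_mul]

lemma int2D_00 (ha2 : 0 < a2) (ht2 : 0 < t2) (k : ℝ) :
    Integrable (fun p : ℝ × ℝ => gd 0 a2 p.1 * gd (k * p.1) t2 p.2)
        ((volume : Measure ℝ).prod volume) ∧
      ∫ p, gd 0 a2 p.1 * gd (k * p.1) t2 p.2 ∂((volume : Measure ℝ).prod volume) = 1 := by
  have h := int2D ha2 ht2 k (fun _ => 1) (fun _ => 1) continuous_const continuous_const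
    (fun m => by simpa using gd_integrable ht2 m) (fun _ => 1)
    (fun m => by simp [gd_val0 ht2 m])
    (by simpa using gd_integrable ha2 0)
  simp only [one_mul] at h
  refine ⟨h.1, ?_⟩
  rw [h.2]
  have : ∀ x : ℝ, gd 0 a2 x * ∫ y, gd (k * x) t2 y = gd 0 a2 x := by
    intro x; rw [gd_val0 ht2, mul_one]
  simp_rw [this]
  exact c_val0 ha2

lemma int2D_20 (ha2 : 0 < a2) (ht2 : 0 < t2) (k : ℝ) :
    Integrable (fun p : ℝ × ℝ => p.1 ^ 2 * (gd 0 a2 p.1 * gd (k * p.1) t2 p.2))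
        ((volume : Measure ℝ).prod volume) ∧
      ∫ p, p.1 ^ 2 * (gd 0 a2 p.1 * gd (k * p.1) t2 p.2)
        ∂((volume : Measure ℝ).prod volume) = a2 := by
  have h := int2D ha2 ht2 k (fun x => x ^ 2) (fun _ => 1) (by fun_prop) continuous_const
    (fun m => by simpa using gd_integrable ht2 m) (fun _ => 1)
    (fun m => by simp [gd_val0 ht2 m])
    (by
      have := c_int2 ha2
      refine this.congr ?_
      filter_upwards with x
      rw [abs_of_nonneg (sq_nonneg x), mul_one])
  simp only [one_mul] at h
  have hcg : ∀ p : ℝ × ℝ, (p.1 ^ 2 * gd 0 a2 p.1) * gd (k * p.1) t2 p.2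
      = p.1 ^ 2 * (gd 0 a2 p.1 * gd (k * p.1) t2 p.2) := fun p => by ring
  constructor
  · exact h.1.congr (by filter_upwards with p using hcg p)
  · rw [← integral_congr_ae (Filter.Eventually.of_forall hcg), h.2]
    have : ∀ x : ℝ, x ^ 2 * gd 0 a2 x * ∫ y, gd (k * x) t2 y = x ^ 2 * gd 0 a2 x := by
      intro x; rw [gd_val0 ht2, mul_one]
    simp_rw [this]
    exact c_val2 ha2

lemma int2D_02 (ha2 : 0 < a2) (ht2 : 0 < t2) (k : ℝ) :
    Integrable (fun p : ℝ × ℝ => p.2 ^ 2 * (gd 0 a2 p.1 * gd (k * p.1) t2 p.2))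
        ((volume : Measure ℝ).prod volume) ∧
      ∫ p, p.2 ^ 2 * (gd 0 a2 p.1 * gd (k * p.1) t2 p.2)
        ∂((volume : Measure ℝ).prod volume) = t2 + k ^ 2 * a2 := by
  have hWint : Integrable (fun x : ℝ => |(1 : ℝ)| * gd 0 a2 x * (t2 + (k * x) ^ 2)) := by
    have := ((c_int ha2).const_mul t2).add ((c_int2 ha2).const_mul (k ^ 2))
    refine this.congr ?_
    filter_upwards with x
    simp only [Pi.add_apply, abs_one]
    ring
  have h := int2D ha2 ht2 k (fun _ => 1) (fun y => y ^ 2) continuous_const (by fun_prop)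
    (fun m => gd_int2 ht2 m) (fun m => t2 + m ^ 2)
    (fun m => by
      have : ∀ y : ℝ, |y ^ 2| * gd m t2 y = y ^ 2 * gd m t2 y := fun y => by
        rw [abs_of_nonneg (sq_nonneg y)]
      simp_rw [this]
      rw [gd_val2 ht2 m])
    hWint
  have hcg : ∀ p : ℝ × ℝ, (1 * gd 0 a2 p.1) * (p.2 ^ 2 * gd (k * p.1) t2 p.2)
      = p.2 ^ 2 * (gd 0 a2 p.1 * gd (k * p.1) t2 p.2) := fun p => by ring
  constructor
  · exact h.1.congr (by filter_upwards with p using hcg p)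
  · rw [← integral_congr_ae (Filter.Eventually.of_forall hcg), h.2]
    have : ∀ x : ℝ, 1 * gd 0 a2 x * ∫ y, y ^ 2 * gd (k * x) t2 y
        = t2 * gd 0 a2 x + k ^ 2 * (x ^ 2 * gd 0 a2 x) := by
      intro x; rw [gd_val2 ht2]; ring
    simp_rw [this]
    rw [integral_add ((c_int ha2).const_mul t2) ((c_int2 ha2).const_mul (k ^ 2)),
      integral_const_mul, integral_const_mul, c_val0 ha2, c_val2 ha2]
    ring

lemma int2D_11 (ha2 : 0 < a2) (ht2 : 0 < t2) (k : ℝ) :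
    Integrable (fun p : ℝ × ℝ => p.1 * p.2 * (gd 0 a2 p.1 * gd (k * p.1) t2 p.2))
        ((volume : Measure ℝ).prod volume) ∧
      ∫ p, p.1 * p.2 * (gd 0 a2 p.1 * gd (k * p.1) t2 p.2)
        ∂((volume : Measure ℝ).prod volume) = k * a2 := by
  have hWint : Integrable (fun x : ℝ => |x| * gd 0 a2 x * ((1 + (t2 + (k * x) ^ 2)) / 2)) := by
    have h2a : (0 : ℝ) < (2 * a2)⁻¹ := by positivity
    have := integrable_poly_exp h2a
      (g := fun x => |x| * (Real.sqrt (2 * π * a2))⁻¹ * ((1 + (t2 + (k * x) ^ 2)) / 2))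
      (by fun_prop) (C := (Real.sqrt (2 * π * a2))⁻¹ * (1 + t2 + k ^ 2) / 2)
      (fun x => by
        have hK : (0 : ℝ) ≤ (Real.sqrt (2 * π * a2))⁻¹ := inv_nonneg.mpr (Real.sqrt_nonneg _)
        rw [abs_of_nonneg (by positivity)]
        have h1 := abs_le_one_add_pow4 x
        have h3 := cube_abs_le_one_add_pow4 x
        have hc3 : |x| ^ 3 = x ^ 2 * |x| := by rw [pow_succ, sq_abs]
        have e1 : |x| * (1 + t2) ≤ (1 + t2) * (1 + x ^ 4) := by
          nlinarith [abs_nonneg x, ht2.le]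
        have e2 : x ^ 2 * |x| ≤ 1 + x ^ 4 := hc3 ▸ h3
        have key : |x| * (1 + t2) + k ^ 2 * (x ^ 2 * |x|)
            ≤ (1 + t2) * (1 + x ^ 4) + k ^ 2 * (1 + x ^ 4) :=
          add_le_add e1 (mul_le_mul_of_nonneg_left e2 (sq_nonneg k))
        nlinarith [mul_le_mul_of_nonneg_left key
          (show (0 : ℝ) ≤ (Real.sqrt (2 * π * a2))⁻¹ / 2 by positivity)])
    refine this.congr ?_
    filter_upwards with x
    rw [gd0_eq ha2]
    ring
  have h := int2D ha2 ht2 k (fun x => x) (fun y => y) continuous_id continuous_id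
    (fun m => gd_int1 ht2 m) (fun m => (1 + (t2 + m ^ 2)) / 2)
    (fun m => gd_abs_le ht2 m) hWint
  have hcg : ∀ p : ℝ × ℝ, (p.1 * gd 0 a2 p.1) * (p.2 * gd (k * p.1) t2 p.2)
      = p.1 * p.2 * (gd 0 a2 p.1 * gd (k * p.1) t2 p.2) := fun p => by ring
  constructor
  · exact h.1.congr (by filter_upwards with p using hcg p)
  · rw [← integral_congr_ae (Filter.Eventually.of_forall hcg), h.2]
    have : ∀ x : ℝ, x * gd 0 a2 x * ∫ y, y * gd (k * x) t2 y
        = k * (x ^ 2 * gd 0 a2 x) := by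
      intro x; rw [gd_val1 ht2]; ring
    simp_rw [this]
    rw [integral_const_mul, c_val2 ha2]

end TwoD

lemma sqrt_two_pi_sq {a : ℝ} (ha : 0 < a) :
    Real.sqrt (2 * π * a ^ 2) = Real.sqrt (2 * π) * a := by
  rw [Real.sqrt_mul (by positivity), Real.sqrt_sq ha.le]

lemma gd_log {m v x : ℝ} (hv : 0 < v) :
    Real.log (gd m v x) = -Real.log (Real.sqrt (2 * π * v)) + -(x - m) ^ 2 / (2 * v) := by
  unfold gd
  rw [Real.log_mul (inv_ne_zero (by positivity)) (Real.exp_ne_zero _), Real.log_inv,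
    Real.log_exp]

lemma density_eq {a b l : ℝ} (ha : 0 < a) (hb : 0 < b) (h1l : 0 < 1 - l ^ 2) (x y : ℝ) :
    (2 * Real.pi * a * b * Real.sqrt (1 - l ^ 2))⁻¹ *
        Real.exp (-(2 * (1 - l ^ 2))⁻¹ *
          ((x / a) ^ 2 - 2 * l * (x / a) * (y / b) + (y / b) ^ 2))
      = gd 0 (a ^ 2) x * gd (l * b / a * x) (b ^ 2 * (1 - l ^ 2)) y := by
  have hs : 0 < Real.sqrt (1 - l ^ 2) := Real.sqrt_pos.mpr h1l
  unfold gd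
  rw [sub_zero]
  have hc1 : Real.sqrt (2 * π * a ^ 2) = Real.sqrt (2 * π) * a := sqrt_two_pi_sq ha
  have hc2 : Real.sqrt (2 * π * (b ^ 2 * (1 - l ^ 2)))
      = Real.sqrt (2 * π) * (b * Real.sqrt (1 - l ^ 2)) := by
    rw [show 2 * π * (b ^ 2 * (1 - l ^ 2)) = (2 * π * b ^ 2) * (1 - l ^ 2) by ring,
      Real.sqrt_mul (by positivity), sqrt_two_pi_sq hb]
    ring
  have h2π : Real.sqrt (2 * π) * Real.sqrt (2 * π) = 2 * π :=
    Real.mul_self_sqrt (by positivity)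
  have hK : ((Real.sqrt (2 * π * a ^ 2))⁻¹ * (Real.sqrt (2 * π * (b ^ 2 * (1 - l ^ 2))))⁻¹ : ℝ)
      = (2 * π * a * b * Real.sqrt (1 - l ^ 2))⁻¹ := by
    rw [hc1, hc2, ← mul_inv]
    congr 1
    calc Real.sqrt (2 * π) * a * (Real.sqrt (2 * π) * (b * Real.sqrt (1 - l ^ 2)))
        = Real.sqrt (2 * π) * Real.sqrt (2 * π) * (a * b * Real.sqrt (1 - l ^ 2)) := by ring
      _ = 2 * π * a * b * Real.sqrt (1 - l ^ 2) := by rw [h2π]; ring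
  have hE : -(2 * (1 - l ^ 2))⁻¹ * ((x / a) ^ 2 - 2 * l * (x / a) * (y / b) + (y / b) ^ 2)
      = -x ^ 2 / (2 * a ^ 2) + -(y - l * b / a * x) ^ 2 / (2 * (b ^ 2 * (1 - l ^ 2))) := by
    field_simp
    ring
  rw [show (Real.sqrt (2 * π * a ^ 2))⁻¹ * Real.exp (-x ^ 2 / (2 * a ^ 2)) *
        ((Real.sqrt (2 * π * (b ^ 2 * (1 - l ^ 2))))⁻¹ *
          Real.exp (-(y - l * b / a * x) ^ 2 / (2 * (b ^ 2 * (1 - l ^ 2)))))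
      = ((Real.sqrt (2 * π * a ^ 2))⁻¹ * (Real.sqrt (2 * π * (b ^ 2 * (1 - l ^ 2))))⁻¹) *
          Real.exp (-x ^ 2 / (2 * a ^ 2) + -(y - l * b / a * x) ^ 2 /
            (2 * (b ^ 2 * (1 - l ^ 2)))) from by rw [Real.exp_add]; ring]
  rw [hK, ← hE]

lemma prod_gauss_eq {c b : ℝ} (hc : 0 < c) (hb : 0 < b) :
    (gaussianReal 0 (c ^ 2).toNNReal).prod (gaussianReal 0 (b ^ 2).toNNReal)
      = ((volume : Measure ℝ).prod (volume : Measure ℝ)).withDensity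
          (fun p => ENNReal.ofReal (gd 0 (c ^ 2) p.1) * ENNReal.ofReal (gd 0 (b ^ 2) p.2)) := by
  have hvc : ((c ^ 2).toNNReal) ≠ 0 := by
    simp only [ne_eq, Real.toNNReal_eq_zero, not_le]
    positivity
  have hvb : ((b ^ 2).toNNReal) ≠ 0 := by
    simp only [ne_eq, Real.toNNReal_eq_zero, not_le]
    positivity
  have hpdf : ∀ (r : ℝ), 0 < r → ∀ x, gaussianPDF 0 (r ^ 2).toNNReal x
      = ENNReal.ofReal (gd 0 (r ^ 2) x) := by
    intro r hr x
    rw [gaussianPDF]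
    congr 1
    rw [gaussianPDFReal, gd, Real.coe_toNNReal _ (sq_nonneg r)]
  have hmc : Measurable fun x : ℝ => ENNReal.ofReal (gd 0 (c ^ 2) x) :=
    gd_cont1.measurable.ennreal_ofReal
  have hmb : Measurable fun x : ℝ => ENNReal.ofReal (gd 0 (b ^ 2) x) :=
    gd_cont1.measurable.ennreal_ofReal
  refine Measure.prod_eq (fun u t hu ht => ?_)
  rw [withDensity_apply _ (hu.prod ht), ← Measure.prod_restrict,
    lintegral_prod_mul hmc.aemeasurable hmb.aemeasurable,
    gaussianReal_apply _ hvc u, gaussianReal_apply _ hvb t]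
  congr 1
  · exact lintegral_congr fun x => (hpdf c hc x).symm
  · exact lintegral_congr fun y => (hpdf b hb y).symm

end KLBiv

open KLBiv

/-- Let `μ₁` be the centered bivariate Gaussian measure on `ℝ²` with covariance
matrix `[[σ̃², λσ̃σ_e], [λσ̃σ_e, σ_e²]]` and `μ₀ = N(0, σ_γ²) ⊗ N(0, σ_e²)`.
Then `D(μ₁ ‖ μ₀) = ½ log(1/(1−λ²)) + ½(σ̃²/σ_γ² − 1 − log(σ̃²/σ_γ²))`. -/
theorem klDiv_bivGaussian_prodGaussian
    (σt σe σγ l : ℝ) (hσt : 0 < σt) (hσe : 0 < σe) (hσγ : 0 < σγ)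
    (hl : l ∈ Set.Ioo (-1 : ℝ) 1) :
    klDivR (bivGaussian σt σe l)
        ((gaussianReal 0 (σγ ^ 2).toNNReal).prod (gaussianReal 0 (σe ^ 2).toNNReal)) =
      1 / 2 * Real.log (1 / (1 - l ^ 2)) +
        1 / 2 * (σt ^ 2 / σγ ^ 2 - 1 - Real.log (σt ^ 2 / σγ ^ 2)) := by
  obtain ⟨hl1, hl2⟩ := hl
  have h1l : (0 : ℝ) < 1 - l ^ 2 := by nlinarith
  have ha2 : (0 : ℝ) < σt ^ 2 := by positivity
  have hb2 : (0 : ℝ) < σe ^ 2 := by positivity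
  have hc2 : (0 : ℝ) < σγ ^ 2 := by positivity
  have ht2 : (0 : ℝ) < σe ^ 2 * (1 - l ^ 2) := by positivity
  set μ₀ := (gaussianReal 0 (σγ ^ 2).toNNReal).prod (gaussianReal 0 (σe ^ 2).toNNReal) with hμ₀def
  -- density functions
  have hDrpos : ∀ p : ℝ × ℝ,
      0 < gd 0 (σt ^ 2) p.1 * gd (l * σe / σt * p.1) (σe ^ 2 * (1 - l ^ 2)) p.2 :=
    fun p => mul_pos (gd_pos ha2 _ _) (gd_pos ht2 _ _)
  have hgrpos : ∀ p : ℝ × ℝ, 0 < gd 0 (σγ ^ 2) p.1 * gd 0 (σe ^ 2) p.2 :=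
    fun p => mul_pos (gd_pos hc2 _ _) (gd_pos hb2 _ _)
  have hDrcont : Continuous fun p : ℝ × ℝ =>
      gd 0 (σt ^ 2) p.1 * gd (l * σe / σt * p.1) (σe ^ 2 * (1 - l ^ 2)) p.2 := by
    unfold gd; fun_prop
  -- measure identities
  have hμ1 : bivGaussian σt σe l = (volume : Measure (ℝ × ℝ)).withDensity
      (fun p => ENNReal.ofReal
        (gd 0 (σt ^ 2) p.1 * gd (l * σe / σt * p.1) (σe ^ 2 * (1 - l ^ 2)) p.2)) := by
    unfold bivGaussian
    congr 1
    funext p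
    exact congrArg ENNReal.ofReal (density_eq hσt hσe h1l p.1 p.2)
  have hμ0 : μ₀ = ((volume : Measure ℝ).prod (volume : Measure ℝ)).withDensity
      (fun p => ENNReal.ofReal (gd 0 (σγ ^ 2) p.1) * ENNReal.ofReal (gd 0 (σe ^ 2) p.2)) :=
    prod_gauss_eq hσγ hσe
  rw [← Measure.volume_eq_prod] at hμ0
  set D : ℝ × ℝ → ℝ≥0∞ := fun p => ENNReal.ofReal
    (gd 0 (σt ^ 2) p.1 * gd (l * σe / σt * p.1) (σe ^ 2 * (1 - l ^ 2)) p.2) with hDdef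
  set G : ℝ × ℝ → ℝ≥0∞ := fun p =>
    ENNReal.ofReal (gd 0 (σγ ^ 2) p.1) * ENNReal.ofReal (gd 0 (σe ^ 2) p.2) with hGdef
  have hDmeas : Measurable D := hDrcont.measurable.ennreal_ofReal
  have hGmeas : Measurable G := by
    apply Measurable.mul (f := fun p : ℝ × ℝ => ENNReal.ofReal (gd 0 (σγ ^ 2) p.1))
      (g := fun p : ℝ × ℝ => ENNReal.ofReal (gd 0 (σe ^ 2) p.2))
    · exact (gd_cont1.measurable.comp measurable_fst).ennreal_ofReal
    · exact (gd_cont1.measurable.comp measurable_snd).ennreal_ofReal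
  set R : ℝ × ℝ → ℝ≥0∞ := fun p => D p / G p with hRdef
  have hRmeas : Measurable R := hDmeas.div hGmeas
  have hGne0 : ∀ p, G p ≠ 0 := fun p =>
    mul_ne_zero (ENNReal.ofReal_pos.mpr (gd_pos hc2 _ _)).ne'
      (ENNReal.ofReal_pos.mpr (gd_pos hb2 _ _)).ne'
  have hGnetop : ∀ p, G p ≠ ⊤ := fun p => ENNReal.mul_ne_top ENNReal.ofReal_ne_top
    ENNReal.ofReal_ne_top
  have hμ1' : bivGaussian σt σe l = μ₀.withDensity R := by
    rw [hμ0, ← withDensity_mul _ hGmeas hRmeas,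
      show G * R = D from funext fun p => ENNReal.mul_div_cancel (hGne0 p) (hGnetop p)]
    exact hμ1
  have hrn : (bivGaussian σt σe l).rnDeriv μ₀ =ᵐ[μ₀] R := by
    rw [hμ1']
    exact Measure.rnDeriv_withDensity μ₀ hRmeas
  have hac : bivGaussian σt σe l ≪ μ₀ := hμ1' ▸ withDensity_absolutelyContinuous μ₀ R
  have hrn1 : (bivGaussian σt σe l).rnDeriv μ₀ =ᵐ[bivGaussian σt σe l] R :=
    hrn.filter_mono hac.ae_le
  have hRtoReal : ∀ p : ℝ × ℝ, (R p).toReal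
      = (gd 0 (σt ^ 2) p.1 * gd (l * σe / σt * p.1) (σe ^ 2 * (1 - l ^ 2)) p.2) /
        (gd 0 (σγ ^ 2) p.1 * gd 0 (σe ^ 2) p.2) := by
    intro p
    rw [hRdef]
    simp only
    rw [hGdef]
    simp only
    rw [← ENNReal.ofReal_mul (gd_nonneg hc2 _ _), ENNReal.toReal_div,
      ENNReal.toReal_ofReal (hDrpos p).le, ENNReal.toReal_ofReal (hgrpos p).le]
  have hkl : klDivR (bivGaussian σt σe l) μ₀ = ∫ p, Real.log
      ((gd 0 (σt ^ 2) p.1 * gd (l * σe / σt * p.1) (σe ^ 2 * (1 - l ^ 2)) p.2) /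
        (gd 0 (σγ ^ 2) p.1 * gd 0 (σe ^ 2) p.2)) ∂(bivGaussian σt σe l) := by
    unfold klDivR
    refine integral_congr_ae ?_
    filter_upwards [hrn1] with p hp
    rw [hp, hRtoReal p]
  rw [hkl]
  -- express the integral over volume
  have hμ1'' : bivGaussian σt σe l = (volume : Measure (ℝ × ℝ)).withDensity
      (fun p => ((gd 0 (σt ^ 2) p.1 *
        gd (l * σe / σt * p.1) (σe ^ 2 * (1 - l ^ 2)) p.2).toNNReal : ℝ≥0∞)) := hμ1
  have hNNmeas : Measurable fun p : ℝ × ℝ => (gd 0 (σt ^ 2) p.1 *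
      gd (l * σe / σt * p.1) (σe ^ 2 * (1 - l ^ 2)) p.2).toNNReal :=
    hDrcont.measurable.real_toNNReal
  rw [hμ1'', integral_withDensity_eq_integral_smul hNNmeas]
  have hsmul : ∀ p : ℝ × ℝ, (gd 0 (σt ^ 2) p.1 *
        gd (l * σe / σt * p.1) (σe ^ 2 * (1 - l ^ 2)) p.2).toNNReal • Real.log
        ((gd 0 (σt ^ 2) p.1 * gd (l * σe / σt * p.1) (σe ^ 2 * (1 - l ^ 2)) p.2) /
          (gd 0 (σγ ^ 2) p.1 * gd 0 (σe ^ 2) p.2))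
      = (gd 0 (σt ^ 2) p.1 * gd (l * σe / σt * p.1) (σe ^ 2 * (1 - l ^ 2)) p.2) * Real.log
        ((gd 0 (σt ^ 2) p.1 * gd (l * σe / σt * p.1) (σe ^ 2 * (1 - l ^ 2)) p.2) /
          (gd 0 (σγ ^ 2) p.1 * gd 0 (σe ^ 2) p.2)) := by
    intro p
    rw [NNReal.smul_def, Real.coe_toNNReal _ (hDrpos p).le, smul_eq_mul]
  simp_rw [hsmul]
  -- pointwise expansion of the integrand
  have hs : 0 < Real.sqrt (1 - l ^ 2) := Real.sqrt_pos.mpr h1l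
  have hs2 : Real.sqrt (1 - l ^ 2) ^ 2 = 1 - l ^ 2 := Real.sq_sqrt h1l.le
  set K : ℝ := Real.log (σγ / (σt * Real.sqrt (1 - l ^ 2))) with hKdef
  set A : ℝ := (2 * σγ ^ 2)⁻¹ - (2 * σt ^ 2 * (1 - l ^ 2))⁻¹ with hAdef
  set B : ℝ := l / (σt * σe * (1 - l ^ 2)) with hBdef
  set C : ℝ := (2 * σe ^ 2)⁻¹ - (2 * σe ^ 2 * (1 - l ^ 2))⁻¹ with hCdef
  have hpoint : ∀ p : ℝ × ℝ,
      (gd 0 (σt ^ 2) p.1 * gd (l * σe / σt * p.1) (σe ^ 2 * (1 - l ^ 2)) p.2) * Real.log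
        ((gd 0 (σt ^ 2) p.1 * gd (l * σe / σt * p.1) (σe ^ 2 * (1 - l ^ 2)) p.2) /
          (gd 0 (σγ ^ 2) p.1 * gd 0 (σe ^ 2) p.2))
      = K * (gd 0 (σt ^ 2) p.1 * gd (l * σe / σt * p.1) (σe ^ 2 * (1 - l ^ 2)) p.2)
        + (A * (p.1 ^ 2 * (gd 0 (σt ^ 2) p.1 *
            gd (l * σe / σt * p.1) (σe ^ 2 * (1 - l ^ 2)) p.2))
          + (B * (p.1 * p.2 * (gd 0 (σt ^ 2) p.1 *
              gd (l * σe / σt * p.1) (σe ^ 2 * (1 - l ^ 2)) p.2))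
            + C * (p.2 ^ 2 * (gd 0 (σt ^ 2) p.1 *
                gd (l * σe / σt * p.1) (σe ^ 2 * (1 - l ^ 2)) p.2)))) := by
    intro p
    obtain ⟨x, y⟩ := p
    simp only
    have hlog : Real.log
        ((gd 0 (σt ^ 2) x * gd (l * σe / σt * x) (σe ^ 2 * (1 - l ^ 2)) y) /
          (gd 0 (σγ ^ 2) x * gd 0 (σe ^ 2) y))
        = K + (A * x ^ 2 + (B * (x * y) + C * y ^ 2)) := by
      rw [Real.log_div (mul_pos (gd_pos ha2 _ _) (gd_pos ht2 _ _)).ne'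
          (mul_pos (gd_pos hc2 _ _) (gd_pos hb2 _ _)).ne',
        Real.log_mul (gd_pos ha2 _ _).ne' (gd_pos ht2 _ _).ne',
        Real.log_mul (gd_pos hc2 _ _).ne' (gd_pos hb2 _ _).ne',
        gd_log ha2, gd_log ht2, gd_log hc2, gd_log hb2]
      have hconst : -Real.log (Real.sqrt (2 * π * σt ^ 2))
            - Real.log (Real.sqrt (2 * π * (σe ^ 2 * (1 - l ^ 2))))
            + Real.log (Real.sqrt (2 * π * σγ ^ 2))
            + Real.log (Real.sqrt (2 * π * σe ^ 2)) = K := by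
        have hc2' : Real.sqrt (2 * π * (σe ^ 2 * (1 - l ^ 2)))
            = Real.sqrt (2 * π) * σe * Real.sqrt (1 - l ^ 2) := by
          rw [show 2 * π * (σe ^ 2 * (1 - l ^ 2)) = (2 * π * σe ^ 2) * (1 - l ^ 2) by ring,
            Real.sqrt_mul (by positivity), sqrt_two_pi_sq hσe]
        have h2πpos : (0 : ℝ) < Real.sqrt (2 * π) := Real.sqrt_pos.mpr (by positivity)
        rw [sqrt_two_pi_sq hσt, sqrt_two_pi_sq hσγ, sqrt_two_pi_sq hσe, hc2',
          Real.log_mul (by positivity) hs.ne',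
          Real.log_mul h2πpos.ne' hσt.ne', Real.log_mul h2πpos.ne' hσγ.ne',
          Real.log_mul h2πpos.ne' hσe.ne', hKdef,
          Real.log_div hσγ.ne' (by positivity), Real.log_mul hσt.ne' hs.ne']
        ring
      have hquad : -(x - 0) ^ 2 / (2 * σt ^ 2)
            + -(y - l * σe / σt * x) ^ 2 / (2 * (σe ^ 2 * (1 - l ^ 2)))
            - (-(x - 0) ^ 2 / (2 * σγ ^ 2) + -(y - 0) ^ 2 / (2 * σe ^ 2))
          = A * x ^ 2 + (B * (x * y) + C * y ^ 2) := by
        rw [hAdef, hBdef, hCdef]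
        field_simp
        ring
      calc -Real.log (Real.sqrt (2 * π * σt ^ 2)) + -(x - 0) ^ 2 / (2 * σt ^ 2)
            + (-Real.log (Real.sqrt (2 * π * (σe ^ 2 * (1 - l ^ 2))))
              + -(y - l * σe / σt * x) ^ 2 / (2 * (σe ^ 2 * (1 - l ^ 2))))
            - (-Real.log (Real.sqrt (2 * π * σγ ^ 2)) + -(x - 0) ^ 2 / (2 * σγ ^ 2)
              + (-Real.log (Real.sqrt (2 * π * σe ^ 2)) + -(y - 0) ^ 2 / (2 * σe ^ 2)))
          = (-Real.log (Real.sqrt (2 * π * σt ^ 2))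
              - Real.log (Real.sqrt (2 * π * (σe ^ 2 * (1 - l ^ 2))))
              + Real.log (Real.sqrt (2 * π * σγ ^ 2))
              + Real.log (Real.sqrt (2 * π * σe ^ 2)))
            + (-(x - 0) ^ 2 / (2 * σt ^ 2)
              + -(y - l * σe / σt * x) ^ 2 / (2 * (σe ^ 2 * (1 - l ^ 2)))
              - (-(x - 0) ^ 2 / (2 * σγ ^ 2) + -(y - 0) ^ 2 / (2 * σe ^ 2))) := by ring
        _ = K + (A * x ^ 2 + (B * (x * y) + C * y ^ 2)) := by rw [hconst, hquad]
    rw [hlog]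
    ring
  simp_rw [hpoint]
  -- split the integral
  rw [Measure.volume_eq_prod]
  have i00 := int2D_00 ha2 ht2 (l * σe / σt)
  have i20 := int2D_20 ha2 ht2 (l * σe / σt)
  have i11 := int2D_11 ha2 ht2 (l * σe / σt)
  have i02 := int2D_02 ha2 ht2 (l * σe / σt)
  have hg1 : Integrable (fun p : ℝ × ℝ =>
      B * (p.1 * p.2 * (gd 0 (σt ^ 2) p.1 *
        gd (l * σe / σt * p.1) (σe ^ 2 * (1 - l ^ 2)) p.2))
      + C * (p.2 ^ 2 * (gd 0 (σt ^ 2) p.1 *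
        gd (l * σe / σt * p.1) (σe ^ 2 * (1 - l ^ 2)) p.2)))
      ((volume : Measure ℝ).prod volume) := by
    exact (i11.1.const_mul B).add (i02.1.const_mul C)
  have hg2 : Integrable (fun p : ℝ × ℝ =>
      A * (p.1 ^ 2 * (gd 0 (σt ^ 2) p.1 *
        gd (l * σe / σt * p.1) (σe ^ 2 * (1 - l ^ 2)) p.2))
      + (B * (p.1 * p.2 * (gd 0 (σt ^ 2) p.1 *
          gd (l * σe / σt * p.1) (σe ^ 2 * (1 - l ^ 2)) p.2))
        + C * (p.2 ^ 2 * (gd 0 (σt ^ 2) p.1 *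
          gd (l * σe / σt * p.1) (σe ^ 2 * (1 - l ^ 2)) p.2))))
      ((volume : Measure ℝ).prod volume) := by
    exact (i20.1.const_mul A).add hg1
  rw [integral_add (i00.1.const_mul K) hg2, integral_add (i20.1.const_mul A) hg1,
    integral_add (i11.1.const_mul B) (i02.1.const_mul C),
    integral_const_mul, integral_const_mul, integral_const_mul, integral_const_mul,
    i00.2, i20.2, i11.2, i02.2]
  -- final algebra
  have hlogs : K = Real.log σγ - Real.log σt - Real.log (Real.sqrt (1 - l ^ 2)) := by
    rw [hKdef, Real.log_div hσγ.ne' (by positivity), Real.log_mul hσt.ne' hs.ne']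
    ring
  have hlog2 : Real.log (1 / (1 - l ^ 2)) = -(2 * Real.log (Real.sqrt (1 - l ^ 2))) := by
    calc Real.log (1 / (1 - l ^ 2)) = -Real.log (1 - l ^ 2) := by
          rw [one_div, Real.log_inv]
      _ = -Real.log (Real.sqrt (1 - l ^ 2) ^ 2) := by rw [hs2]
      _ = -(2 * Real.log (Real.sqrt (1 - l ^ 2))) := by
          rw [Real.log_pow]; push_cast; ring
  have hlog3 : Real.log (σt ^ 2 / σγ ^ 2) = 2 * Real.log σt - 2 * Real.log σγ := by
    rw [Real.log_div (by positivity) (by positivity), Real.log_pow, Real.log_pow]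
    push_cast
    ring
  rw [hlogs, hlog2, hlog3, hAdef, hBdef, hCdef]
  field_simp
  ring
end

section
/- (Theorem 2) Under the healthy stationary closed-loop model, let J(σ_e²) := W·E[x_k²] + U·E[u_k²] denote the stationary LQG cost with watermarking variance σ_e², where u_k = L x̂_{k|k} + e_k and e_k is independent of x̂_{k|k}. Then the increase in the LQG cost due to watermarking satisfies ΔLQG := J(σ_e²) − J(0) = ( U + B²(W + L² U) / (1 − (A + B L)²) ) σ_e²; equivalently, σ_e² = ΔLQG / ( U + B²(W + L² U)/(1 − (A + B L)²) ). -/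
open MeasureTheory ProbabilityTheory

open Real Filter Topology
open scoped ENNReal NNReal

namespace WatermarkAux

set_option linter.unusedSectionVars false




lemma integrable_sq_exp_neg_mul_sq {b : ℝ} (hb : 0 < b) :
    Integrable fun x : ℝ => x ^ 2 * Real.exp (-b * x ^ 2) := by
  have h := integrable_rpow_mul_exp_neg_mul_sq hb (s := 2) (by norm_num)
  have : (fun x : ℝ => x ^ (2 : ℝ) * Real.exp (-b * x ^ 2))
      = fun x : ℝ => x ^ 2 * Real.exp (-b * x ^ 2) := by
    funext x
    rw [show (2 : ℝ) = ((2 : ℕ) : ℝ) by norm_num, Real.rpow_natCast]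
  rwa [this] at h

lemma haux_tendsto_top {b : ℝ} (hb : 0 < b) :
    Tendsto (fun y : ℝ => Real.exp (-b * y ^ 2)) atTop (𝓝 0) := by
  refine Real.tendsto_exp_atBot.comp ?_
  exact (tendsto_pow_atTop two_ne_zero).const_mul_atTop_of_neg (neg_lt_zero.2 hb)

lemma haux_tendsto_bot {b : ℝ} (hb : 0 < b) :
    Tendsto (fun y : ℝ => Real.exp (-b * y ^ 2)) atBot (𝓝 0) := by
  have h := (haux_tendsto_top hb).comp tendsto_neg_atBot_atTop
  simpa [Function.comp_def, neg_sq] using h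

lemma integral_mul_exp_neg_mul_sq_total {b : ℝ} (hb : 0 < b) :
    ∫ x : ℝ, x * Real.exp (-b * x ^ 2) = 0 := by
  have hb' : (2 * b) ≠ 0 := by positivity
  have A : ∀ x : ℝ, HasDerivAt (fun y : ℝ => -(2 * b)⁻¹ * Real.exp (-b * y ^ 2))
      (x * Real.exp (-b * x ^ 2)) x := by
    intro x
    have h1 : HasDerivAt (fun y : ℝ => -b * y ^ 2) (-b * (2 * x)) x := by
      simpa using (hasDerivAt_pow 2 x).const_mul (-b)
    have h2 := (h1.exp).const_mul (-(2 * b)⁻¹)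
    refine h2.congr_deriv ?_
    field_simp
  have B : Tendsto (fun y : ℝ => -(2 * b)⁻¹ * Real.exp (-b * y ^ 2)) atTop (𝓝 0) := by
    have := (haux_tendsto_top hb).const_mul (-(2 * b)⁻¹)
    simpa using this
  have C : Tendsto (fun y : ℝ => -(2 * b)⁻¹ * Real.exp (-b * y ^ 2)) atBot (𝓝 0) := by
    have := (haux_tendsto_bot hb).const_mul (-(2 * b)⁻¹)
    simpa using this
  have key := integral_of_hasDerivAt_of_tendsto A (integrable_mul_exp_neg_mul_sq hb) C B
  simpa using key

lemma tendsto_mul_exp_neg_mul_sq_top {b : ℝ} (hb : 0 < b) :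
    Tendsto (fun y : ℝ => y * Real.exp (-b * y ^ 2)) atTop (𝓝 0) := by
  have h := rpow_mul_exp_neg_mul_sq_isLittleO_exp_neg hb 1
  have h2 : Tendsto (fun x : ℝ => Real.exp (-(1/2) * x)) atTop (𝓝 0) := by
    refine Real.tendsto_exp_atBot.comp ?_
    exact tendsto_id.const_mul_atTop_of_neg (by norm_num)
  have h3 := h.trans_tendsto h2
  refine h3.congr' ?_
  filter_upwards [eventually_ge_atTop (0 : ℝ)] with x hx
  rw [Real.rpow_one]

lemma tendsto_mul_exp_neg_mul_sq_bot {b : ℝ} (hb : 0 < b) :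
    Tendsto (fun y : ℝ => y * Real.exp (-b * y ^ 2)) atBot (𝓝 0) := by
  have h := ((tendsto_mul_exp_neg_mul_sq_top hb).comp tendsto_neg_atBot_atTop).neg
  simpa [Function.comp_def, neg_sq] using h

lemma integral_sq_mul_exp_neg_mul_sq {b : ℝ} (hb : 0 < b) :
    ∫ x : ℝ, x ^ 2 * Real.exp (-b * x ^ 2) = Real.sqrt (π / b) / (2 * b) := by
  have A : ∀ x : ℝ, HasDerivAt (fun y : ℝ => y * Real.exp (-b * y ^ 2))
      (Real.exp (-b * x ^ 2) - 2 * b * (x ^ 2 * Real.exp (-b * x ^ 2))) x := by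
    intro x
    have h1 : HasDerivAt (fun y : ℝ => -b * y ^ 2) (-b * (2 * x)) x := by
      simpa using (hasDerivAt_pow 2 x).const_mul (-b)
    have h2 := (hasDerivAt_id x).mul h1.exp
    refine h2.congr_deriv ?_
    simp only [id]
    ring
  have hint : Integrable (fun x : ℝ =>
      Real.exp (-b * x ^ 2) - 2 * b * (x ^ 2 * Real.exp (-b * x ^ 2))) := by
    exact (integrable_exp_neg_mul_sq hb).sub ((integrable_sq_exp_neg_mul_sq hb).const_mul _)
  have key := integral_of_hasDerivAt_of_tendsto A hint
    (tendsto_mul_exp_neg_mul_sq_bot hb) (tendsto_mul_exp_neg_mul_sq_top hb)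
  rw [integral_sub (integrable_exp_neg_mul_sq hb)
      ((integrable_sq_exp_neg_mul_sq hb).const_mul _), integral_const_mul,
      integral_gaussian, sub_zero] at key
  have h2b : (2 * b) ≠ 0 := by positivity
  field_simp at key ⊢
  linarith








lemma integral_gaussianReal_eq (f : ℝ → ℝ) {v : ℝ≥0} (hv : v ≠ 0) :
    ∫ x, f x ∂(gaussianReal 0 v) = ∫ x, gaussianPDFReal 0 v x * f x := by
  rw [gaussianReal_of_var_ne_zero 0 hv]
  have h1 : gaussianPDF 0 v = fun x => ((Real.toNNReal (gaussianPDFReal 0 v x) : ℝ≥0) : ℝ≥0∞) :=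
    rfl
  rw [h1, integral_withDensity_eq_integral_smul (measurable_gaussianPDFReal 0 v).real_toNNReal f]
  congr 1
  funext x
  simp [NNReal.smul_def, Real.coe_toNNReal _ (gaussianPDFReal_nonneg 0 v x)]

lemma gaussianPDFReal_zero_mean_eq (v : ℝ≥0) (x : ℝ) :
    gaussianPDFReal 0 v x = (Real.sqrt (2 * π * v))⁻¹ * Real.exp (-(2 * (v:ℝ))⁻¹ * x ^ 2) := by
  simp only [gaussianPDFReal_def, sub_zero]
  rw [show -x ^ 2 / (2 * (v:ℝ)) = -(2 * (v:ℝ))⁻¹ * x ^ 2 by ring]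

lemma integral_id_gaussianReal (v : ℝ≥0) : ∫ x, x ∂(gaussianReal 0 v) = 0 := by
  rcases eq_or_ne v 0 with rfl | hv
  · rw [gaussianReal_zero_var]
    simp [integral_dirac]
  · have hvpos : (0:ℝ) < v := NNReal.coe_pos.2 (pos_iff_ne_zero.2 hv)
    have hb : (0:ℝ) < (2 * (v:ℝ))⁻¹ := by positivity
    rw [integral_gaussianReal_eq _ hv]
    have h2 : ∀ x : ℝ, gaussianPDFReal 0 v x * x
        = (Real.sqrt (2 * π * v))⁻¹ * (x * Real.exp (-(2 * (v:ℝ))⁻¹ * x ^ 2)) := by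
      intro x
      rw [gaussianPDFReal_zero_mean_eq]
      ring
    simp only [h2]
    rw [integral_const_mul, integral_mul_exp_neg_mul_sq_total hb, mul_zero]

lemma integral_sq_gaussianReal (v : ℝ≥0) : ∫ x, x ^ 2 ∂(gaussianReal 0 v) = (v : ℝ) := by
  rcases eq_or_ne v 0 with rfl | hv
  · rw [gaussianReal_zero_var]
    simp [integral_dirac]
  · have hvpos : (0:ℝ) < v := NNReal.coe_pos.2 (pos_iff_ne_zero.2 hv)
    have hb : (0:ℝ) < (2 * (v:ℝ))⁻¹ := by positivity
    rw [integral_gaussianReal_eq _ hv]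
    have h2 : ∀ x : ℝ, gaussianPDFReal 0 v x * x ^ 2
        = (Real.sqrt (2 * π * v))⁻¹ * (x ^ 2 * Real.exp (-(2 * (v:ℝ))⁻¹ * x ^ 2)) := by
      intro x
      rw [gaussianPDFReal_zero_mean_eq]
      ring
    simp only [h2]
    rw [integral_const_mul, integral_sq_mul_exp_neg_mul_sq hb]
    have hsq : Real.sqrt (π / (2 * (v:ℝ))⁻¹) = Real.sqrt (2 * π * (v:ℝ)) := by
      congr 1
      field_simp
    rw [hsq]
    have hne : Real.sqrt (2 * π * (v:ℝ)) ≠ 0 := (Real.sqrt_pos.2 (by positivity)).ne'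
    field_simp

lemma memLp_two_id_gaussianReal (v : ℝ≥0) : MemLp id 2 (gaussianReal 0 v) := by
  refine memLp_two_iff_integrable_sq aestronglyMeasurable_id |>.2 ?_
  rcases eq_or_ne v 0 with rfl | hv
  · rw [gaussianReal_zero_var]
    refine ⟨(measurable_id.pow_const 2).aestronglyMeasurable, ?_⟩
    rw [HasFiniteIntegral, lintegral_dirac]
    simp
  · have hvpos : (0:ℝ) < v := NNReal.coe_pos.2 (pos_iff_ne_zero.2 hv)
    have hb : (0:ℝ) < (2 * (v:ℝ))⁻¹ := by positivity
    rw [gaussianReal_of_var_ne_zero 0 hv]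
    rw [integrable_withDensity_iff (measurable_gaussianPDF 0 v)
      (Eventually.of_forall fun x => ENNReal.ofReal_lt_top)]
    have h2 : ∀ x : ℝ, (id x : ℝ) ^ 2 * (gaussianPDF 0 v x).toReal
        = (Real.sqrt (2 * π * v))⁻¹ * (x ^ 2 * Real.exp (-(2 * (v:ℝ))⁻¹ * x ^ 2)) := by
      intro x
      rw [gaussianPDF_def, ENNReal.toReal_ofReal (gaussianPDFReal_nonneg 0 v x),
        gaussianPDFReal_zero_mean_eq]
      simp only [id]
      ring
    simp only [h2]
    exact (integrable_sq_exp_neg_mul_sq hb).const_mul _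





variable {Ω : Type*} [MeasurableSpace Ω] {μ : Measure Ω} [IsProbabilityMeasure μ]

lemma integrable_mul_L2 {f g : Ω → ℝ} (hf : MemLp f 2 μ) (hg : MemLp g 2 μ) :
    Integrable (fun ω => f ω * g ω) μ := by
  have h : (1 : ℝ≥0∞) / 1 = 1 / 2 + 1 / 2 := by
    rw [ENNReal.add_halves]
    norm_num
  have h2 : MemLp (f • g) 1 μ := hg.smul hf
  rw [← memLp_one_iff_integrable]
  exact h2

lemma lintegral_nnorm_mul_le {f g : Ω → ℝ} (hf : AEStronglyMeasurable f μ)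
    (hg : AEStronglyMeasurable g μ) :
    ∫⁻ ω, ‖f ω * g ω‖₊ ∂μ ≤ eLpNorm f 2 μ * eLpNorm g 2 μ := by
  have hconj : Real.HolderConjugate 2 2 := Real.holderConjugate_iff.mpr ⟨one_lt_two, by norm_num⟩
  calc ∫⁻ ω, ‖f ω * g ω‖₊ ∂μ
      = ∫⁻ ω, ((fun ω => (‖f ω‖₊ : ℝ≥0∞)) * fun ω => (‖g ω‖₊ : ℝ≥0∞)) ω ∂μ := by
        simp [nnnorm_mul, ENNReal.coe_mul]
    _ ≤ (∫⁻ ω, (‖f ω‖₊ : ℝ≥0∞) ^ (2:ℝ) ∂μ) ^ (1/2 : ℝ) *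
        (∫⁻ ω, (‖g ω‖₊ : ℝ≥0∞) ^ (2:ℝ) ∂μ) ^ (1/2 : ℝ) :=
        ENNReal.lintegral_mul_le_Lp_mul_Lq μ hconj hf.enorm hg.enorm
    _ = eLpNorm f 2 μ * eLpNorm g 2 μ := by
        rw [eLpNorm_eq_lintegral_rpow_enorm_toReal (by norm_num) (by norm_num),
          eLpNorm_eq_lintegral_rpow_enorm_toReal (by norm_num) (by norm_num)]
        norm_num
        rfl

lemma series_key (g : ℕ → Ω → ℝ) (Cb : ℝ≥0∞) (hCb : Cb ≠ ∞) (r : ℝ) (hr0 : 0 ≤ r) (hr1 : r < 1)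
    (hg : ∀ i, MemLp (g i) 2 μ)
    (hbd : ∀ i, eLpNorm (g i) 2 μ ≤ Cb * ENNReal.ofReal (r ^ i)) :
    MemLp (fun ω => ∑' i, g i ω) 2 μ ∧
    ∀ h : Ω → ℝ, MemLp h 2 μ →
      ∫ ω, (∑' i, g i ω) * h ω ∂μ = ∑' i, ∫ ω, g i ω * h ω ∂μ := by
  have hsum : (∑' i, Cb * ENNReal.ofReal (r ^ i)) ≠ ∞ := by
    rw [ENNReal.tsum_mul_left]
    refine ENNReal.mul_ne_top hCb ?_
    rw [← ENNReal.ofReal_tsum_of_nonneg (fun i => pow_nonneg hr0 i)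
      (summable_geometric_of_lt_one hr0 hr1)]
    exact ENNReal.ofReal_ne_top
  have hae : ∀ᵐ ω ∂μ, Summable fun i => g i ω := by
    have h1 : ∑' i, ∫⁻ ω, ‖g i ω‖₊ ∂μ ≠ ∞ := by
      refine ne_top_of_le_ne_top hsum (ENNReal.tsum_le_tsum fun i => ?_)
      calc ∫⁻ ω, ‖g i ω‖₊ ∂μ = eLpNorm (g i) 1 μ := by rw [eLpNorm_one_eq_lintegral_enorm]; rfl
        _ ≤ eLpNorm (g i) 2 μ := eLpNorm_le_eLpNorm_of_exponent_le (by norm_num) (hg i).1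
        _ ≤ _ := hbd i
    erw [← lintegral_tsum (fun i => (hg i).1.enorm)] at h1
    refine (ae_lt_top' (AEMeasurable.ennreal_tsum fun i => (hg i).1.enorm)
      h1).mono fun ω hω => ?_
    have h2 : Summable fun i => ‖g i ω‖₊ := ENNReal.tsum_coe_ne_top_iff_summable.mp hω.ne
    refine Summable.of_norm ?_
    simpa [coe_nnnorm] using NNReal.summable_coe.2 h2
  have hS : ∀ n, MemLp (fun ω => ∑ i ∈ Finset.range n, g i ω) 2 μ := fun n =>
    memLp_finset_sum (Finset.range n) fun i _ => hg i
  have htend : ∀ᵐ ω ∂μ, Tendsto (fun n => ∑ i ∈ Finset.range n, g i ω) atTop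
      (𝓝 (∑' i, g i ω)) := hae.mono fun ω hω => hω.hasSum.tendsto_sum_nat
  have hmeasT : AEStronglyMeasurable (fun ω => ∑' i, g i ω) μ := by
    refine aestronglyMeasurable_iff_aemeasurable.2 ?_
    exact aemeasurable_of_tendsto_metrizable_ae' (fun n => (hS n).1.aemeasurable) htend
  have hTnorm : eLpNorm (fun ω => ∑' i, g i ω) 2 μ ≤ ∑' i, Cb * ENNReal.ofReal (r ^ i) := by
    refine le_trans (Lp.eLpNorm_lim_le_liminf_eLpNorm (fun n => (hS n).1) _ htend) ?_
    refine liminf_le_of_frequently_le (Frequently.of_forall fun n => ?_) (by isBoundedDefault)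
    calc eLpNorm (fun ω => ∑ i ∈ Finset.range n, g i ω) 2 μ
        ≤ ∑ i ∈ Finset.range n, eLpNorm (g i) 2 μ := by
          have h0 : (fun ω => ∑ i ∈ Finset.range n, g i ω) = ∑ i ∈ Finset.range n, g i := by
            funext ω
            simp
          rw [h0]
          exact eLpNorm_sum_le (p := 2) (fun i _ => (hg i).1) (by norm_num)
      _ ≤ ∑ i ∈ Finset.range n, Cb * ENNReal.ofReal (r ^ i) :=
          Finset.sum_le_sum fun i _ => hbd i
      _ ≤ ∑' i, Cb * ENNReal.ofReal (r ^ i) := ENNReal.sum_le_tsum _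
  have hT : MemLp (fun ω => ∑' i, g i ω) 2 μ :=
    ⟨hmeasT, lt_of_le_of_lt hTnorm hsum.lt_top⟩
  refine ⟨hT, fun h hh => ?_⟩
  have hpt : (fun ω => (∑' i, g i ω) * h ω) = fun ω => ∑' i, g i ω * h ω := by
    funext ω
    exact (tsum_mul_right).symm
  rw [hpt]
  refine integral_tsum (fun i => (hg i).1.mul hh.1) ?_
  refine ne_top_of_le_ne_top ?_ (ENNReal.tsum_le_tsum fun i =>
    (lintegral_nnorm_mul_le (hg i).1 hh.1).trans
      (mul_le_mul_left (hbd i) _))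
  rw [ENNReal.tsum_mul_right]
  exact ENNReal.mul_ne_top hsum (hh.eLpNorm_lt_top.ne)



section Series
variable {Ω : Type*} [MeasurableSpace Ω] {μ : Measure Ω} [IsProbabilityMeasure μ]

lemma eLpNorm_const_mul_fn (c : ℝ) (f : Ω → ℝ) :
    eLpNorm (fun ω => c * f ω) 2 μ = ENNReal.ofReal |c| * eLpNorm f 2 μ := by
  have h : (fun ω => c * f ω) = c • f := rfl
  rw [h, eLpNorm_const_smul, ← ofReal_norm, Real.norm_eq_abs]

lemma integral_sq_add2 {f g : Ω → ℝ} (hf : MemLp f 2 μ) (hg : MemLp g 2 μ) :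
    ∫ ω, (f ω + g ω) ^ 2 ∂μ =
      ∫ ω, f ω ^ 2 ∂μ + ∫ ω, g ω ^ 2 ∂μ + 2 * ∫ ω, f ω * g ω ∂μ := by
  have h1 : (fun ω => (f ω + g ω) ^ 2)
      = fun ω => f ω ^ 2 + (g ω ^ 2 + 2 * (f ω * g ω)) := funext fun ω => by ring
  have hint2 : Integrable (fun ω => g ω ^ 2 + 2 * (f ω * g ω)) μ :=
    hg.integrable_sq.add ((integrable_mul_L2 hf hg).const_mul 2)
  rw [h1, integral_add hf.integrable_sq hint2,
    integral_add hg.integrable_sq ((integrable_mul_L2 hf hg).const_mul 2), integral_const_mul]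
  ring

lemma integral_mul_add2 {f g h : Ω → ℝ} (hf : MemLp f 2 μ) (hg : MemLp g 2 μ)
    (hh : MemLp h 2 μ) :
    ∫ ω, (f ω + g ω) * h ω ∂μ = ∫ ω, f ω * h ω ∂μ + ∫ ω, g ω * h ω ∂μ := by
  have h1 : (fun ω => (f ω + g ω) * h ω)
      = fun ω => f ω * h ω + g ω * h ω := funext fun ω => by ring
  rw [h1, integral_add (integrable_mul_L2 hf hh) (integrable_mul_L2 hg hh)]

lemma integral_sq_add3 {f g h : Ω → ℝ} (hf : MemLp f 2 μ) (hg : MemLp g 2 μ)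
    (hh : MemLp h 2 μ) :
    ∫ ω, (f ω + g ω + h ω) ^ 2 ∂μ =
      ∫ ω, f ω ^ 2 ∂μ + ∫ ω, g ω ^ 2 ∂μ + ∫ ω, h ω ^ 2 ∂μ
        + 2 * ∫ ω, f ω * g ω ∂μ + 2 * ∫ ω, f ω * h ω ∂μ + 2 * ∫ ω, g ω * h ω ∂μ := by
  have h2 := integral_sq_add2 (f := fun ω => f ω + g ω) (g := h) (hf.add hg) hh
  rw [h2, integral_sq_add2 hf hg, integral_mul_add2 hf hg hh]
  ring

/-- transfer of gaussian law facts -/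
lemma law_facts {X : Ω → ℝ} {v : ℝ≥0} (hX : Measure.map X μ = gaussianReal 0 v) :
    AEMeasurable X μ ∧ MemLp X 2 μ ∧ (∫ ω, X ω ∂μ = 0) ∧ (∫ ω, X ω ^ 2 ∂μ = (v : ℝ)) ∧
      eLpNorm X 2 μ = eLpNorm id 2 (gaussianReal 0 v) := by
  have hm : AEMeasurable X μ := by
    by_contra hc
    rw [Measure.map_of_not_aemeasurable hc] at hX
    have h1 : (gaussianReal 0 v) Set.univ = 1 := measure_univ
    rw [← hX] at h1
    simp at h1
  refine ⟨hm, ?_, ?_, ?_, ?_⟩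
  · have h2 := (memLp_map_measure_iff aestronglyMeasurable_id hm).1
      (hX ▸ memLp_two_id_gaussianReal v)
    simpa [Function.comp] using h2
  · have h2 := integral_map hm (f := fun x : ℝ => x) aestronglyMeasurable_id
    rw [hX, integral_id_gaussianReal] at h2
    exact h2.symm
  · have h2 := integral_map hm (f := fun x : ℝ => x ^ 2)
      ((measurable_id.pow_const 2).aestronglyMeasurable)
    rw [hX, integral_sq_gaussianReal] at h2
    exact h2.symm
  · have h2 := eLpNorm_map_measure (p := 2) (aestronglyMeasurable_id) hm
    rw [hX] at h2
    rw [h2]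
    rfl

end Series

end WatermarkAux

open WatermarkAux

/-- (Theorem 2) Under the healthy stationary closed-loop model, the increase in
the stationary LQG cost `J = W·E[x_k²] + U·E[u_k²]` due to a watermarking signal
of variance `σ_e²` satisfies
`ΔLQG = J(σ_e²) − J(0) = (U + B²(W + L²U)/(1 − (A+BL)²)) σ_e²`; equivalently,
`σ_e² = ΔLQG / (U + B²(W + L²U)/(1 − (A+BL)²))`. -/
theorem watermarking_LQG_cost_increase
    {Ω : Type*} [MeasurableSpace Ω] (μ : Measure Ω) [IsProbabilityMeasure μ]
    (e γ : ℤ → Ω → ℝ) (A B C K L P R σe W U : ℝ)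
    (hW : 0 < W) (hU : 0 < U) (hC : C ≠ 0) (hP : 0 < P) (hR : 0 < R)
    (hA : |A + B * L| < 1) (hσe : 0 ≤ σe ^ 2)
    -- `e` is i.i.d. `N(0, σ_e²)`, `γ` is i.i.d. `N(0, C²P + R)` (the
    -- steady-state Kalman innovations), mutually independent
    (helaw : ∀ k, Measure.map (e k) μ = gaussianReal 0 (σe ^ 2).toNNReal)
    (hγlaw : ∀ k, Measure.map (γ k) μ = gaussianReal 0 (C ^ 2 * P + R).toNNReal)
    (hindep : iIndepFun (Sum.elim e γ) μ)
    -- the stationary filtered estimate with watermarking, and the one without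
    -- (i.e. the same series with `σ_e² = 0`, so the `e`-terms vanish)
    (xhat xhat0 : ℤ → Ω → ℝ)
    (hxhat : ∀ (k : ℤ) (ω : Ω), xhat k ω =
      ∑' i : ℕ, (A + B * L) ^ i * (B * e (k - 1 - (i : ℤ)) ω + K * γ (k - (i : ℤ)) ω))
    (hxhat0 : ∀ (k : ℤ) (ω : Ω), xhat0 k ω =
      ∑' i : ℕ, (A + B * L) ^ i * (K * γ (k - (i : ℤ)) ω))
    -- the measurements with and without watermarking
    (y y0 : ℤ → Ω → ℝ)
    (hy : ∀ (k : ℤ) (ω : Ω), y k ω =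
      γ k ω + C * ((A + B * L) * xhat (k - 1) ω + B * e (k - 1) ω))
    (hy0 : ∀ (k : ℤ) (ω : Ω), y0 k ω =
      γ k ω + C * ((A + B * L) * xhat0 (k - 1) ω))
    -- the stationary states: centered, with `y_k = C x_k + v_k`, where `v_k` is
    -- centered measurement noise of variance `R` independent of `x_k`
    (x v x0 v0 : ℤ → Ω → ℝ)
    (hxL2 : ∀ k, MemLp (x k) 2 μ) (hvL2 : ∀ k, MemLp (v k) 2 μ)
    (hx0L2 : ∀ k, MemLp (x0 k) 2 μ) (hv0L2 : ∀ k, MemLp (v0 k) 2 μ)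
    (hxm : ∀ k, ∫ ω, x k ω ∂μ = 0) (hvm : ∀ k, ∫ ω, v k ω ∂μ = 0)
    (hx0m : ∀ k, ∫ ω, x0 k ω ∂μ = 0) (hv0m : ∀ k, ∫ ω, v0 k ω ∂μ = 0)
    (hvvar : ∀ k, ∫ ω, (v k ω) ^ 2 ∂μ = R) (hv0var : ∀ k, ∫ ω, (v0 k ω) ^ 2 ∂μ = R)
    (hxv : ∀ k, IndepFun (x k) (v k) μ) (hx0v0 : ∀ k, IndepFun (x0 k) (v0 k) μ)
    (hyx : ∀ (k : ℤ) (ω : Ω), y k ω = C * x k ω + v k ω)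
    (hy0x0 : ∀ (k : ℤ) (ω : Ω), y0 k ω = C * x0 k ω + v0 k ω)
    -- the controls with and without watermarking
    (u u0 : ℤ → Ω → ℝ)
    (hu : ∀ (k : ℤ) (ω : Ω), u k ω = L * xhat k ω + e k ω)
    (hu0 : ∀ (k : ℤ) (ω : Ω), u0 k ω = L * xhat0 k ω) :
    -- the stationary LQG costs with and without watermarking
    ∀ k : ℤ,
      letI Jw : ℝ := W * ∫ ω, (x k ω) ^ 2 ∂μ + U * ∫ ω, (u k ω) ^ 2 ∂μ
      letI Jn : ℝ := W * ∫ ω, (x0 k ω) ^ 2 ∂μ + U * ∫ ω, (u0 k ω) ^ 2 ∂μ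
      Jw - Jn = (U + B ^ 2 * (W + L ^ 2 * U) / (1 - (A + B * L) ^ 2)) * σe ^ 2 ∧
        σe ^ 2 = (Jw - Jn) / (U + B ^ 2 * (W + L ^ 2 * U) / (1 - (A + B * L) ^ 2)) := by
  intro k
  set ρ : ℝ := A + B * L with hρdef
  have hρ2 : ρ ^ 2 < 1 := by
    have h1 := abs_nonneg ρ
    nlinarith [sq_abs ρ]
  have h1ρ : (0:ℝ) < 1 - ρ ^ 2 := by linarith
  have hσγpos : (0:ℝ) < C ^ 2 * P + R := by positivity
  set σγ : ℝ := C ^ 2 * P + R with hσγdef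
  -- law facts
  have hce : (((σe ^ 2).toNNReal : ℝ≥0) : ℝ) = σe ^ 2 := Real.coe_toNNReal _ hσe
  have hcγ : (((C ^ 2 * P + R).toNNReal : ℝ≥0) : ℝ) = σγ := Real.coe_toNNReal _ hσγpos.le
  have hef := fun i => law_facts (helaw i)
  have hγf := fun j => law_facts (hγlaw j)
  have heL2 : ∀ i, MemLp (e i) 2 μ := fun i => (hef i).2.1
  have hγL2 : ∀ j, MemLp (γ j) 2 μ := fun j => (hγf j).2.1
  have heV : ∀ i, ∫ ω, e i ω ^ 2 ∂μ = σe ^ 2 := fun i => by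
    rw [(hef i).2.2.2.1, hce]
  have hγV : ∀ j, ∫ ω, γ j ω ^ 2 ∂μ = σγ := fun j => by
    rw [(hγf j).2.2.2.1, hcγ]
  have heVm : ∀ i, ∫ ω, e i ω * e i ω ∂μ = σe ^ 2 := fun i => by
    rw [show (fun ω => e i ω * e i ω) = fun ω => e i ω ^ 2 from funext fun ω => by ring, heV i]
  have hγVm : ∀ j, ∫ ω, γ j ω * γ j ω ∂μ = σγ := fun j => by
    rw [show (fun ω => γ j ω * γ j ω) = fun ω => γ j ω ^ 2 from funext fun ω => by ring, hγV j]
  -- independence cross terms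
  have hcross : ∀ s t : ℤ ⊕ ℤ, s ≠ t →
      ∫ ω, Sum.elim e γ s ω * Sum.elim e γ t ω ∂μ = 0 := by
    intro s t hst
    have hFm : ∀ s : ℤ ⊕ ℤ, AEStronglyMeasurable (Sum.elim e γ s) μ := by
      rintro (i | j)
      · exact (heL2 i).1
      · exact (hγL2 j).1
    have hFmean : ∀ s : ℤ ⊕ ℤ, ∫ ω, Sum.elim e γ s ω ∂μ = 0 := by
      rintro (i | j)
      · exact (hef i).2.2.1
      · exact (hγf j).2.2.1
    have h1 := (hindep.indepFun hst).integral_mul_eq_mul_integral (hFm s) (hFm t)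
    have h2 : ∫ ω, Sum.elim e γ s ω * Sum.elim e γ t ω ∂μ
        = (∫ ω, Sum.elim e γ s ω ∂μ) * ∫ ω, Sum.elim e γ t ω ∂μ := h1
    rw [h2, hFmean s, hFmean t, mul_zero]
  have hee : ∀ i j : ℤ, i ≠ j → ∫ ω, e i ω * e j ω ∂μ = 0 := fun i j hij =>
    hcross (Sum.inl i) (Sum.inl j) (by simpa using hij)
  have heγ : ∀ i j : ℤ, ∫ ω, e i ω * γ j ω ∂μ = 0 := fun i j =>
    hcross (Sum.inl i) (Sum.inr j) (by simp)
  have hγe : ∀ i j : ℤ, ∫ ω, γ i ω * e j ω ∂μ = 0 := fun i j =>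
    hcross (Sum.inr i) (Sum.inl j) (by simp)
  have hγγ : ∀ i j : ℤ, i ≠ j → ∫ ω, γ i ω * γ j ω ∂μ = 0 := fun i j hij =>
    hcross (Sum.inr i) (Sum.inr j) (by simpa using hij)
  -- the series family
  set G : ℤ → ℝ → ℕ → Ω → ℝ :=
    fun m Bc i ω => ρ ^ i * (Bc * e (m - 1 - (i : ℤ)) ω + K * γ (m - (i : ℤ)) ω) with hGdef
  have hGL2 : ∀ m Bc i, MemLp (G m Bc i) 2 μ := fun m Bc i =>
    (((heL2 _).const_mul Bc).add ((hγL2 _).const_mul K)).const_mul _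
  set Ke : ℝ≥0∞ := eLpNorm id 2 (gaussianReal 0 (σe ^ 2).toNNReal) with hKedef
  set Kγ : ℝ≥0∞ := eLpNorm id 2 (gaussianReal 0 (C ^ 2 * P + R).toNNReal) with hKγdef
  have hKe : Ke ≠ ∞ := (memLp_two_id_gaussianReal _).2.ne
  have hKγ : Kγ ≠ ∞ := (memLp_two_id_gaussianReal _).2.ne
  have heN : ∀ i, eLpNorm (e i) 2 μ = Ke := fun i => (hef i).2.2.2.2
  have hγN : ∀ j, eLpNorm (γ j) 2 μ = Kγ := fun j => (hγf j).2.2.2.2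
  have hGbd : ∀ m Bc i, eLpNorm (G m Bc i) 2 μ ≤
      (ENNReal.ofReal |Bc| * Ke + ENNReal.ofReal |K| * Kγ) * ENNReal.ofReal (|ρ| ^ i) := by
    intro m Bc i
    have h1 : G m Bc i = fun ω =>
        (ρ ^ i) * ((fun ω => Bc * e (m - 1 - (i : ℤ)) ω + K * γ (m - (i : ℤ)) ω) ω) := rfl
    rw [h1, eLpNorm_const_mul_fn]
    rw [abs_pow]
    rw [mul_comm (ENNReal.ofReal |Bc| * Ke + ENNReal.ofReal |K| * Kγ) _]
    refine mul_le_mul_right ?_ _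
    refine le_trans (eLpNorm_add_le ((heL2 _).const_mul Bc).1 ((hγL2 _).const_mul K).1
      (by norm_num)) ?_
    rw [eLpNorm_const_mul_fn, eLpNorm_const_mul_fn, heN, hγN]
  have hKey : ∀ (m : ℤ) (Bc : ℝ),
      MemLp (fun ω => ∑' i, G m Bc i ω) 2 μ ∧
      ∀ h : Ω → ℝ, MemLp h 2 μ →
        ∫ ω, (∑' i, G m Bc i ω) * h ω ∂μ = ∑' i, ∫ ω, G m Bc i ω * h ω ∂μ := by
    intro m Bc
    refine series_key (G m Bc) _ ?_ |ρ| (abs_nonneg ρ) hA (hGL2 m Bc) (hGbd m Bc)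
    exact ENNReal.add_ne_top.2 ⟨ENNReal.mul_ne_top ENNReal.ofReal_ne_top hKe,
      ENNReal.mul_ne_top ENNReal.ofReal_ne_top hKγ⟩
  -- per-term integrals
  have hterm : ∀ (m : ℤ) (Bc : ℝ) (i : ℕ) (h : Ω → ℝ), MemLp h 2 μ →
      ∫ ω, G m Bc i ω * h ω ∂μ =
        ρ ^ i * (Bc * ∫ ω, e (m - 1 - (i : ℤ)) ω * h ω ∂μ
          + K * ∫ ω, γ (m - (i : ℤ)) ω * h ω ∂μ) := by
    intro m Bc i h hh
    have h1 : (fun ω => G m Bc i ω * h ω) = fun ω =>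
        (ρ ^ i * Bc) * (e (m - 1 - (i : ℤ)) ω * h ω)
          + (ρ ^ i * K) * (γ (m - (i : ℤ)) ω * h ω) := by
      funext ω
      simp only [hGdef]
      ring
    rw [h1, integral_add ((integrable_mul_L2 (heL2 _) hh).const_mul _)
        ((integrable_mul_L2 (hγL2 _) hh).const_mul _), integral_const_mul, integral_const_mul]
    ring
  -- computation 1 : ∫ T_m * e_n = 0 for m ≤ n
  have comp1 : ∀ (m : ℤ) (Bc : ℝ) (n : ℤ), m ≤ n →
      ∫ ω, (∑' i, G m Bc i ω) * e n ω ∂μ = 0 := by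
    intro m Bc n hmn
    rw [(hKey m Bc).2 (e n) (heL2 n)]
    have h0 : ∀ i : ℕ, ∫ ω, G m Bc i ω * e n ω ∂μ = 0 := by
      intro i
      rw [hterm m Bc i (e n) (heL2 n)]
      have hne : m - 1 - (i : ℤ) ≠ n := by
        have : (0:ℤ) ≤ (i : ℤ) := Int.natCast_nonneg i
        omega
      rw [hee _ _ hne, hγe, mul_zero, mul_zero, add_zero, mul_zero]
    simp only [h0]
    exact tsum_zero
  -- computation 2 : ∫ T_m * γ_n = 0 for m < n
  have comp2 : ∀ (m : ℤ) (Bc : ℝ) (n : ℤ), m < n →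
      ∫ ω, (∑' i, G m Bc i ω) * γ n ω ∂μ = 0 := by
    intro m Bc n hmn
    rw [(hKey m Bc).2 (γ n) (hγL2 n)]
    have h0 : ∀ i : ℕ, ∫ ω, G m Bc i ω * γ n ω ∂μ = 0 := by
      intro i
      rw [hterm m Bc i (γ n) (hγL2 n)]
      have hne : m - (i : ℤ) ≠ n := by
        have : (0:ℤ) ≤ (i : ℤ) := Int.natCast_nonneg i
        omega
      rw [hγγ _ _ hne, heγ, mul_zero, mul_zero, add_zero, mul_zero]
    simp only [h0]
    exact tsum_zero
  -- computation 3 : ∫ T_m * e_{m-1-j} = ρ^j * Bc * σe²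
  have comp3 : ∀ (m : ℤ) (Bc : ℝ) (j : ℕ),
      ∫ ω, (∑' i, G m Bc i ω) * e (m - 1 - (j : ℤ)) ω ∂μ = ρ ^ j * Bc * σe ^ 2 := by
    intro m Bc j
    rw [(hKey m Bc).2 _ (heL2 _)]
    rw [tsum_eq_single j ?_]
    · rw [hterm m Bc j _ (heL2 _), heVm, hγe, mul_zero, add_zero]
      ring
    · intro i hij
      rw [hterm m Bc i _ (heL2 _)]
      have hne : m - 1 - (i : ℤ) ≠ m - 1 - (j : ℤ) := by
        intro hcon
        apply hij
        omega
      rw [hee _ _ hne, hγe]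
      simp
  -- computation 4 : ∫ T_m * γ_{m-j} = ρ^j * K * σγ
  have comp4 : ∀ (m : ℤ) (Bc : ℝ) (j : ℕ),
      ∫ ω, (∑' i, G m Bc i ω) * γ (m - (j : ℤ)) ω ∂μ = ρ ^ j * K * σγ := by
    intro m Bc j
    rw [(hKey m Bc).2 _ (hγL2 _)]
    rw [tsum_eq_single j ?_]
    · rw [hterm m Bc j _ (hγL2 _), hγVm, heγ, mul_zero, zero_add]
      ring
    · intro i hij
      rw [hterm m Bc i _ (hγL2 _)]
      have hne : m - (i : ℤ) ≠ m - (j : ℤ) := by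
        intro hcon
        apply hij
        omega
      rw [hγγ _ _ hne, heγ]
      simp
  -- computation 5 : second moment of T_m
  have comp5 : ∀ (m : ℤ) (Bc : ℝ),
      ∫ ω, (∑' i, G m Bc i ω) * (∑' i, G m Bc i ω) ∂μ =
        (Bc ^ 2 * σe ^ 2 + K ^ 2 * σγ) * (1 - ρ ^ 2)⁻¹ := by
    intro m Bc
    rw [(hKey m Bc).2 _ (hKey m Bc).1]
    have h0 : ∀ i : ℕ, ∫ ω, G m Bc i ω * (∑' i', G m Bc i' ω) ∂μ =
        (Bc ^ 2 * σe ^ 2 + K ^ 2 * σγ) * (ρ ^ 2) ^ i := by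
      intro i
      have hterm2 := hterm m Bc i _ (hKey m Bc).1
      rw [hterm2]
      have hcomm1 : ∫ ω, e (m - 1 - (i : ℤ)) ω * (∑' i', G m Bc i' ω) ∂μ
          = ∫ ω, (∑' i', G m Bc i' ω) * e (m - 1 - (i : ℤ)) ω ∂μ :=
        integral_congr_ae (Eventually.of_forall fun ω => mul_comm _ _)
      have hcomm2 : ∫ ω, γ (m - (i : ℤ)) ω * (∑' i', G m Bc i' ω) ∂μ
          = ∫ ω, (∑' i', G m Bc i' ω) * γ (m - (i : ℤ)) ω ∂μ :=
        integral_congr_ae (Eventually.of_forall fun ω => mul_comm _ _)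
      rw [hcomm1, hcomm2, comp3 m Bc i, comp4 m Bc i]
      have hpow : (ρ ^ 2) ^ i = ρ ^ i * ρ ^ i := by
        rw [← pow_mul, two_mul, pow_add]
      rw [hpow]
      ring
    simp only [h0]
    rw [tsum_mul_left, tsum_geometric_of_lt_one (sq_nonneg ρ) hρ2]
  -- helpers for pulling constants out
  have pull : ∀ (c : ℝ) (F H : Ω → ℝ), ∫ ω, F ω * (c * H ω) ∂μ = c * ∫ ω, F ω * H ω ∂μ := by
    intro c F H
    rw [show (fun ω => F ω * (c * H ω)) = fun ω => c * (F ω * H ω) from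
      funext fun ω => by ring, integral_const_mul]
  have pull' : ∀ (c : ℝ) (F H : Ω → ℝ), ∫ ω, (c * F ω) * H ω ∂μ = c * ∫ ω, F ω * H ω ∂μ := by
    intro c F H
    rw [show (fun ω => (c * F ω) * H ω) = fun ω => c * (F ω * H ω) from
      funext fun ω => by ring, integral_const_mul]
  have pullsq : ∀ (c : ℝ) (F : Ω → ℝ), ∫ ω, (c * F ω) ^ 2 ∂μ = c ^ 2 * ∫ ω, F ω ^ 2 ∂μ := by
    intro c F
    rw [show (fun ω => (c * F ω) ^ 2) = fun ω => c ^ 2 * (F ω ^ 2) from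
      funext fun ω => by ring, integral_const_mul]
  have hcomm : ∀ F H : Ω → ℝ, ∫ ω, F ω * H ω ∂μ = ∫ ω, H ω * F ω ∂μ := fun F H =>
    integral_congr_ae (Eventually.of_forall fun ω => mul_comm _ _)
  -- xhat representations
  have hxhatEq : ∀ m : ℤ, xhat m = fun ω => ∑' i, G m B i ω := fun m =>
    funext fun ω => by
      rw [hxhat m ω]
  have hxhat0Eq : ∀ m : ℤ, xhat0 m = fun ω => ∑' i, G m 0 i ω := fun m =>
    funext fun ω => by
      rw [hxhat0 m ω]
      exact tsum_congr fun i => by simp [hGdef]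
  have hxhatL2 : ∀ m, MemLp (xhat m) 2 μ := fun m => by
    rw [hxhatEq m]
    exact (hKey m B).1
  have hxhat0L2 : ∀ m, MemLp (xhat0 m) 2 μ := fun m => by
    rw [hxhat0Eq m]
    exact (hKey m 0).1
  -- second moments of xhat, xhat0
  have hxhat2 : ∀ m : ℤ, ∫ ω, xhat m ω ^ 2 ∂μ =
      (B ^ 2 * σe ^ 2 + K ^ 2 * σγ) * (1 - ρ ^ 2)⁻¹ := by
    intro m
    have h1 : (fun ω => xhat m ω ^ 2) = fun ω => (∑' i, G m B i ω) * (∑' i, G m B i ω) := by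
      funext ω
      rw [hxhatEq m, pow_two]
    rw [h1]
    exact comp5 m B
  have hxhat02 : ∀ m : ℤ, ∫ ω, xhat0 m ω ^ 2 ∂μ =
      (0 ^ 2 * σe ^ 2 + K ^ 2 * σγ) * (1 - ρ ^ 2)⁻¹ := by
    intro m
    have h1 : (fun ω => xhat0 m ω ^ 2) = fun ω => (∑' i, G m 0 i ω) * (∑' i, G m 0 i ω) := by
      funext ω
      rw [hxhat0Eq m, pow_two]
    rw [h1]
    exact comp5 m 0
  -- cross moments
  have hxe : ∫ ω, xhat k ω * e k ω ∂μ = 0 := by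
    have h1 : (fun ω => xhat k ω * e k ω) = fun ω => (∑' i, G k B i ω) * e k ω := by
      funext ω
      rw [hxhatEq k]
    rw [h1]
    exact comp1 k B k le_rfl
  have hx1e1 : ∫ ω, xhat (k - 1) ω * e (k - 1) ω ∂μ = 0 := by
    have h1 : (fun ω => xhat (k - 1) ω * e (k - 1) ω)
        = fun ω => (∑' i, G (k - 1) B i ω) * e (k - 1) ω := by
      funext ω
      rw [hxhatEq (k - 1)]
    rw [h1]
    exact comp1 (k - 1) B (k - 1) le_rfl
  have hx1γk : ∫ ω, xhat (k - 1) ω * γ k ω ∂μ = 0 := by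
    have h1 : (fun ω => xhat (k - 1) ω * γ k ω)
        = fun ω => (∑' i, G (k - 1) B i ω) * γ k ω := by
      funext ω
      rw [hxhatEq (k - 1)]
    rw [h1]
    exact comp2 (k - 1) B k (by omega)
  have hx01γk : ∫ ω, xhat0 (k - 1) ω * γ k ω ∂μ = 0 := by
    have h1 : (fun ω => xhat0 (k - 1) ω * γ k ω)
        = fun ω => (∑' i, G (k - 1) 0 i ω) * γ k ω := by
      funext ω
      rw [hxhat0Eq (k - 1)]
    rw [h1]
    exact comp2 (k - 1) 0 k (by omega)
  -- control second moments
  have hEu : ∫ ω, u k ω ^ 2 ∂μ =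
      L ^ 2 * ((B ^ 2 * σe ^ 2 + K ^ 2 * σγ) * (1 - ρ ^ 2)⁻¹) + σe ^ 2 := by
    have h1 : (fun ω => u k ω ^ 2) = fun ω => (L * xhat k ω + e k ω) ^ 2 :=
      funext fun ω => by rw [hu k ω]
    rw [h1, integral_sq_add2 ((hxhatL2 k).const_mul L) (heL2 k), pullsq, pull', hxe, heV k,
      hxhat2 k]
    ring
  have hEu0 : ∫ ω, u0 k ω ^ 2 ∂μ =
      L ^ 2 * ((0 ^ 2 * σe ^ 2 + K ^ 2 * σγ) * (1 - ρ ^ 2)⁻¹) := by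
    have h1 : (fun ω => u0 k ω ^ 2) = fun ω => L ^ 2 * (xhat0 k ω ^ 2) :=
      funext fun ω => by rw [hu0 k ω]; ring
    rw [h1, integral_const_mul, hxhat02 k]
  -- measurement second moments
  have hEy : ∫ ω, y k ω ^ 2 ∂μ =
      σγ + (C * ρ) ^ 2 * ((B ^ 2 * σe ^ 2 + K ^ 2 * σγ) * (1 - ρ ^ 2)⁻¹)
        + (C * B) ^ 2 * σe ^ 2 := by
    have h1 : (fun ω => y k ω ^ 2)
        = fun ω => (γ k ω + (C * ρ) * xhat (k - 1) ω + (C * B) * e (k - 1) ω) ^ 2 :=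
      funext fun ω => by rw [hy k ω]; ring
    rw [h1, integral_sq_add3 (hγL2 k) ((hxhatL2 (k - 1)).const_mul (C * ρ))
      ((heL2 (k - 1)).const_mul (C * B)), hγV k, pullsq, pullsq, heV, hxhat2 (k - 1)]
    rw [pull, hcomm (γ k) (xhat (k - 1)), hx1γk]
    rw [pull, hγe]
    rw [pull', pull, hx1e1]
    ring
  have hEy0 : ∫ ω, y0 k ω ^ 2 ∂μ =
      σγ + (C * ρ) ^ 2 * ((0 ^ 2 * σe ^ 2 + K ^ 2 * σγ) * (1 - ρ ^ 2)⁻¹) := by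
    have h1 : (fun ω => y0 k ω ^ 2)
        = fun ω => (γ k ω + (C * ρ) * xhat0 (k - 1) ω) ^ 2 :=
      funext fun ω => by rw [hy0 k ω]; ring
    rw [h1, integral_sq_add2 (hγL2 k) ((hxhat0L2 (k - 1)).const_mul (C * ρ)), hγV k, pullsq,
      hxhat02 (k - 1), pull, hcomm (γ k) (xhat0 (k - 1)), hx01γk]
    ring
  -- relation to state second moments
  have hEyx : ∫ ω, y k ω ^ 2 ∂μ = C ^ 2 * ∫ ω, x k ω ^ 2 ∂μ + R := by
    have h1 : (fun ω => y k ω ^ 2) = fun ω => (C * x k ω + v k ω) ^ 2 :=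
      funext fun ω => by rw [hyx k ω]
    have hxv0 : ∫ ω, x k ω * v k ω ∂μ = 0 := by
      have h2 : ∫ ω, x k ω * v k ω ∂μ = (∫ ω, x k ω ∂μ) * ∫ ω, v k ω ∂μ :=
        (hxv k).integral_mul_eq_mul_integral (hxL2 k).1 (hvL2 k).1
      rw [h2, hxm k, hvm k, mul_zero]
    rw [h1, integral_sq_add2 ((hxL2 k).const_mul C) (hvL2 k), pullsq, pull', hxv0, hvvar k]
    ring
  have hEy0x0 : ∫ ω, y0 k ω ^ 2 ∂μ = C ^ 2 * ∫ ω, x0 k ω ^ 2 ∂μ + R := by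
    have h1 : (fun ω => y0 k ω ^ 2) = fun ω => (C * x0 k ω + v0 k ω) ^ 2 :=
      funext fun ω => by rw [hy0x0 k ω]
    have hxv0 : ∫ ω, x0 k ω * v0 k ω ∂μ = 0 := by
      have h2 : ∫ ω, x0 k ω * v0 k ω ∂μ = (∫ ω, x0 k ω ∂μ) * ∫ ω, v0 k ω ∂μ :=
        (hx0v0 k).integral_mul_eq_mul_integral (hx0L2 k).1 (hv0L2 k).1
      rw [h2, hx0m k, hv0m k, mul_zero]
    rw [h1, integral_sq_add2 ((hx0L2 k).const_mul C) (hv0L2 k), pullsq, pull', hxv0, hv0var k]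
    ring
  -- state second moments
  have hC2 : (C : ℝ) ^ 2 ≠ 0 := pow_ne_zero 2 hC
  have h1ρ' : (1 : ℝ) - ρ ^ 2 ≠ 0 := h1ρ.ne'
  have hXval : ∫ ω, x k ω ^ 2 ∂μ =
      (σγ + (C * ρ) ^ 2 * ((B ^ 2 * σe ^ 2 + K ^ 2 * σγ) * (1 - ρ ^ 2)⁻¹)
        + (C * B) ^ 2 * σe ^ 2 - R) / C ^ 2 := by
    have h2 := hEyx
    rw [hEy] at h2
    rw [eq_div_iff hC2]
    linarith
  have hX0val : ∫ ω, x0 k ω ^ 2 ∂μ =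
      (σγ + (C * ρ) ^ 2 * ((0 ^ 2 * σe ^ 2 + K ^ 2 * σγ) * (1 - ρ ^ 2)⁻¹) - R) / C ^ 2 := by
    have h2 := hEy0x0
    rw [hEy0] at h2
    rw [eq_div_iff hC2]
    linarith
  -- final assembly
  have hden : (0 : ℝ) < U + B ^ 2 * (W + L ^ 2 * U) / (1 - ρ ^ 2) := by
    have h3 : (0 : ℝ) ≤ B ^ 2 * (W + L ^ 2 * U) / (1 - ρ ^ 2) :=
      div_nonneg (by positivity) h1ρ.le
    linarith
  have hdiff : (W * ∫ ω, x k ω ^ 2 ∂μ + U * ∫ ω, u k ω ^ 2 ∂μ)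
      - (W * ∫ ω, x0 k ω ^ 2 ∂μ + U * ∫ ω, u0 k ω ^ 2 ∂μ)
      = (U + B ^ 2 * (W + L ^ 2 * U) / (1 - ρ ^ 2)) * σe ^ 2 := by
    rw [hXval, hX0val, hEu, hEu0]
    field_simp
    ring
  exact ⟨hdiff, by rw [hdiff, mul_div_cancel_left₀ _ hden.ne']⟩
end
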